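/- arXiv:1709.05006 — 2 statements merged into one kernel-verified Lean document; each statement's English description precedes it below -/
import Mathlib

section
/- Under the null hypothesis (both X and Y are i.i.d. samples from p), the variance of the scaled empirical MMD satisfies Var(n·T_n) ≤ (2/(ρ_{1,n}ρ_{2,n})²)·Σ_k λ̃_k² + (16/n)·(ρ_{1,n}⁻³ + ρ_{2,n}⁻³), where ρ_{1,n} = n₁/n and ρ_{2,n} = n₂/n. In particular, if n > (16/0.1)·(ρ_{1,n}⁻³ + 4ρ_{2,n}⁻³), then Var(n·T_n) ≤ 32/(ρ_{1,n}ρ_{2,n})² + 0.1. -/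
open MeasureTheory ProbabilityTheory Filter Function
open scoped BigOperators Topology NNReal ENNReal

set_option maxHeartbeats 2000000

section Aux

set_option linter.unusedSectionVars false

variable {E : Type*} [mE : MeasurableSpace E] {Ω' : Type*} [MeasurableSpace Ω']
  {S : Type*} [Fintype S] [DecidableEq S]
  {μ : Measure E} [IsProbabilityMeasure μ] {P : Measure Ω'} [IsProbabilityMeasure P]
  {Z : S → Ω' → E} {g : E → E → ℝ}

/-- integrability of bounded measurable functions -/
lemma aux_int_of_bdd {α : Type*} [MeasurableSpace α] (ν : Measure α) [IsFiniteMeasure ν]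
    {f : α → ℝ} (hf : Measurable f) {C : ℝ} (hb : ∀ a, |f a| ≤ C) : Integrable f ν :=
  ⟨hf.aestronglyMeasurable, HasFiniteIntegral.of_bounded (C := C) (ae_of_all _ (fun ω => by
    simpa [Real.norm_eq_abs] using hb ω))⟩

lemma aux_single (hZ : ∀ s, Measurable (Z s)) (hlaw : ∀ s, Measure.map (Z s) P = μ)
    (s : S) (f : E → ℝ) (hf : Measurable f) :
    ∫ ω, f (Z s ω) ∂P = ∫ x, f x ∂μ := by
  rw [← hlaw s, integral_map (hZ s).aemeasurable hf.aestronglyMeasurable]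

lemma aux_map_pair (hZ : ∀ s, Measurable (Z s)) (hlaw : ∀ s, Measure.map (Z s) P = μ)
    (hind : iIndepFun Z P) {s t : S} (hst : s ≠ t) :
    Measure.map (fun ω => (Z s ω, Z t ω)) P = μ.prod μ := by
  have h := (indepFun_iff_map_prod_eq_prod_map_map (hZ s).aemeasurable
    (hZ t).aemeasurable).mp (hind.indepFun hst)
  rwa [hlaw s, hlaw t] at h

lemma aux_pair (hZ : ∀ s, Measurable (Z s)) (hlaw : ∀ s, Measure.map (Z s) P = μ)
    (hind : iIndepFun Z P) {s t : S} (hst : s ≠ t)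
    (f : E × E → ℝ) (hf : Measurable f) :
    ∫ ω, f (Z s ω, Z t ω) ∂P = ∫ z, f z ∂(μ.prod μ) := by
  rw [← aux_map_pair hZ hlaw hind hst,
    integral_map ((hZ s).prodMk (hZ t)).aemeasurable hf.aestronglyMeasurable]

/-- mean of an off-diagonal term vanishes -/
lemma aux_mean (hZ : ∀ s, Measurable (Z s)) (hlaw : ∀ s, Measure.map (Z s) P = μ)
    (hind : iIndepFun Z P)
    (hg : Measurable (Function.uncurry g)) (hgb : ∀ x y, |g x y| ≤ 4)
    (hdeg : ∀ x, ∫ y, g x y ∂μ = 0) (s t : S) :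
    ∫ ω, g (Z s ω) (Z t ω) ∂P = if s = t then ∫ x, g x x ∂μ else 0 := by
  by_cases hst : s = t
  · subst hst
    rw [if_pos rfl]
    exact aux_single hZ hlaw s _ (hg.comp (measurable_id.prodMk measurable_id))
  · rw [if_neg hst]
    have h := aux_pair hZ hlaw hind hst (fun z => g z.1 z.2) (by exact hg)
    simp only at h
    rw [h, integral_prod _ (aux_int_of_bdd _ (by exact hg) (fun z : E × E => hgb z.1 z.2))]
    simp [hdeg]


/-- the quadruple expectation -/
noncomputable def eQ (P : Measure Ω') (Z : S → Ω' → E) (g : E → E → ℝ) (s t u v : S) : ℝ :=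
  ∫ ω, g (Z s ω) (Z t ω) * g (Z u ω) (Z v ω) ∂P

lemma eQ_comm (s t u v : S) : eQ P Z g s t u v = eQ P Z g u v s t := by
  unfold eQ; congr 1; funext ω; ring

lemma eQ_swap_right (hgs : ∀ x y, g x y = g y x) (s t u v : S) :
    eQ P Z g s t u v = eQ P Z g s t v u := by
  unfold eQ; congr 1; funext ω; rw [hgs (Z u ω) (Z v ω)]

lemma eQ_swap_left (hgs : ∀ x y, g x y = g y x) (s t u v : S) :
    eQ P Z g s t u v = eQ P Z g t s u v := by
  unfold eQ; congr 1; funext ω; rw [hgs (Z s ω) (Z t ω)]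

lemma eQ_dddd (hZ : ∀ s, Measurable (Z s)) (hlaw : ∀ s, Measure.map (Z s) P = μ)
    (hg : Measurable (Function.uncurry g)) (s : S) :
    eQ P Z g s s s s = ∫ x, (g x x) ^ 2 ∂μ := by
  have h := aux_single (μ := μ) hZ hlaw s (fun x => (g x x) ^ 2)
    (((hg.comp (measurable_id.prodMk measurable_id))).pow_const 2)
  rw [← h]; unfold eQ; congr 1; funext ω; ring

/-- both pairs have all cross-indices distinct: factorization -/
lemma eQ_indep (hZ : ∀ s, Measurable (Z s))
    (hind : iIndepFun Z P)
    (hg : Measurable (Function.uncurry g)) {s t u v : S}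
    (hsu : s ≠ u) (hsv : s ≠ v) (htu : t ≠ u) (htv : t ≠ v) :
    eQ P Z g s t u v = (∫ ω, g (Z s ω) (Z t ω) ∂P) * (∫ ω, g (Z u ω) (Z v ω) ∂P) := by
  have i1 : IndepFun (fun ω => (Z s ω, Z t ω)) (fun ω => (Z u ω, Z v ω)) P :=
    hind.indepFun_prodMk_prodMk hZ s t u v hsu hsv htu htv
  have i2 : IndepFun (fun ω => g (Z s ω) (Z t ω)) (fun ω => g (Z u ω) (Z v ω)) P :=
    i1.comp hg hg
  exact i2.integral_mul_eq_mul_integral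
    ((hg.comp ((hZ s).prodMk (hZ t))).aestronglyMeasurable)
    ((hg.comp ((hZ u).prodMk (hZ v))).aestronglyMeasurable)

/-- diagonal times off-diagonal sharing the index: vanishes -/
lemma eQ_dd_off (hZ : ∀ s, Measurable (Z s)) (hlaw : ∀ s, Measure.map (Z s) P = μ)
    (hind : iIndepFun Z P)
    (hg : Measurable (Function.uncurry g)) (hgb : ∀ x y, |g x y| ≤ 4)
    (hdeg : ∀ x, ∫ y, g x y ∂μ = 0) {s t : S} (hst : s ≠ t) :
    eQ P Z g s s s t = 0 := by
  have hf : Measurable (fun z : E × E => g z.1 z.1 * g z.1 z.2) := by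
    have h1 : Measurable (fun z : E × E => g z.1 z.1) :=
      hg.comp (measurable_fst.prodMk measurable_fst)
    exact h1.mul hg
  have h := aux_pair hZ hlaw hind hst (fun z : E × E => g z.1 z.1 * g z.1 z.2) hf
  simp only at h
  unfold eQ
  rw [h, integral_prod _ (aux_int_of_bdd _ hf (C := 16) (fun z => by
    calc |g z.1 z.1 * g z.1 z.2| = |g z.1 z.1| * |g z.1 z.2| := abs_mul _ _
    _ ≤ 4 * 4 := mul_le_mul (hgb _ _) (hgb _ _) (abs_nonneg _) (by norm_num)
    _ = 16 := by norm_num))]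
  simp only [integral_const_mul, hdeg, mul_zero, integral_zero]

/-- three distinct indices, common index in first slots: vanishes -/
lemma eQ_triple (hZ : ∀ s, Measurable (Z s)) (hlaw : ∀ s, Measure.map (Z s) P = μ)
    (hind : iIndepFun Z P)
    (hg : Measurable (Function.uncurry g)) (hgb : ∀ x y, |g x y| ≤ 4)
    (hdeg : ∀ x, ∫ y, g x y ∂μ = 0) {s t v : S}
    (hst : s ≠ t) (hsv : s ≠ v) (htv : t ≠ v) :
    eQ P Z g s t s v = 0 := by
  have i1 : IndepFun (fun ω => (Z t ω, Z v ω)) (Z s) P :=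
    hind.indepFun_prodMk hZ t v s (Ne.symm hst) (Ne.symm hsv)
  have hmap : Measure.map (fun ω => ((Z t ω, Z v ω), Z s ω)) P = (μ.prod μ).prod μ := by
    have h := (indepFun_iff_map_prod_eq_prod_map_map
      (((hZ t).prodMk (hZ v)).aemeasurable) ((hZ s).aemeasurable)).mp i1
    rwa [aux_map_pair hZ hlaw hind htv, hlaw s] at h
  have hF : Measurable (fun q : (E × E) × E => g q.2 q.1.1 * g q.2 q.1.2) := by
    have h1 : Measurable (fun q : (E × E) × E => g q.2 q.1.1) :=
      hg.comp (measurable_snd.prodMk (measurable_fst.comp measurable_fst))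
    have h2 : Measurable (fun q : (E × E) × E => g q.2 q.1.2) :=
      hg.comp (measurable_snd.prodMk (measurable_snd.comp measurable_fst))
    exact h1.mul h2
  have hFb : ∀ q : (E × E) × E, |g q.2 q.1.1 * g q.2 q.1.2| ≤ 16 := fun q => by
    calc |g q.2 q.1.1 * g q.2 q.1.2| = |g q.2 q.1.1| * |g q.2 q.1.2| := abs_mul _ _
    _ ≤ 4 * 4 := mul_le_mul (hgb _ _) (hgb _ _) (abs_nonneg _) (by norm_num)
    _ = 16 := by norm_num
  have key : eQ P Z g s t s v
      = ∫ q, (fun q : (E × E) × E => g q.2 q.1.1 * g q.2 q.1.2) q ∂((μ.prod μ).prod μ) := by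
    rw [← hmap, integral_map ((((hZ t).prodMk (hZ v))).prodMk (hZ s)).aemeasurable
      hF.aestronglyMeasurable]
    rfl
  rw [key, integral_prod_symm _ (aux_int_of_bdd _ hF (C := 16) hFb)]
  have inner : ∀ x : E, (∫ q : E × E, g x q.1 * g x q.2 ∂(μ.prod μ)) = 0 := by
    intro x
    rw [integral_prod_mul (fun y => g x y) (fun y => g x y), hdeg x, mul_zero]
  simp only [inner, integral_zero]

/-- matching off-diagonal pair -/
lemma eQ_offdiag_same (hZ : ∀ s, Measurable (Z s)) (hlaw : ∀ s, Measure.map (Z s) P = μ)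
    (hind : iIndepFun Z P)
    (hg : Measurable (Function.uncurry g)) {s t : S} (hst : s ≠ t) :
    eQ P Z g s t s t = ∫ z : E × E, (g z.1 z.2) ^ 2 ∂(μ.prod μ) := by
  have hf : Measurable (fun z : E × E => (g z.1 z.2) ^ 2) := by
    exact (by exact hg : Measurable (fun z : E × E => g z.1 z.2)).pow_const 2
  have h := aux_pair hZ hlaw hind hst (fun z : E × E => (g z.1 z.2) ^ 2) hf
  simp only at h
  unfold eQ
  rw [← h]; congr 1; funext ω; ring


lemma var_core (hZ : ∀ s, Measurable (Z s)) (hlaw : ∀ s, Measure.map (Z s) P = μ)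
    (hind : iIndepFun Z P)
    (hg : Measurable (Function.uncurry g)) (hgs : ∀ x y, g x y = g y x)
    (hgb : ∀ x y, |g x y| ≤ 4) (hdeg : ∀ x, ∫ y, g x y ∂μ = 0)
    (c : S → S → ℝ) (hcs : ∀ s t, c s t = c t s) :
    variance (fun ω => ∑ s, ∑ t, c s t * g (Z s ω) (Z t ω)) P
      ≤ 16 * (∑ s, (c s s) ^ 2)
        + 2 * (∫ z : E × E, (g z.1 z.2) ^ 2 ∂(μ.prod μ))
          * (∑ s, ∑ t, if s = t then 0 else (c s t) ^ 2) := by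
  classical
  set m1 := ∫ x, g x x ∂μ with hm1def
  set m2 := ∫ x, (g x x) ^ 2 ∂μ with hm2def
  set A := ∫ z : E × E, (g z.1 z.2) ^ 2 ∂(μ.prod μ) with hAdef
  have hgZ : ∀ s t, Measurable fun ω => g (Z s ω) (Z t ω) :=
    fun s t => hg.comp ((hZ s).prodMk (hZ t))
  have int_g : ∀ s t, Integrable (fun ω => g (Z s ω) (Z t ω)) P :=
    fun s t => aux_int_of_bdd _ (hgZ s t) (C := 4) (fun ω => hgb _ _)
  have int_gg : ∀ s t u v, Integrable (fun ω => g (Z s ω) (Z t ω) * g (Z u ω) (Z v ω)) P := by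
    intro s t u v
    refine aux_int_of_bdd _ ((hgZ s t).mul (hgZ u v)) (C := 16) (fun ω => ?_)
    calc |g (Z s ω) (Z t ω) * g (Z u ω) (Z v ω)|
        = |g (Z s ω) (Z t ω)| * |g (Z u ω) (Z v ω)| := abs_mul _ _
      _ ≤ 4 * 4 := mul_le_mul (hgb _ _) (hgb _ _) (abs_nonneg _) (by norm_num)
      _ = 16 := by norm_num
  have hmean := aux_mean hZ hlaw hind hg hgb hdeg
  set D : S × S → Ω' → ℝ :=
    fun p ω => c p.1 p.2 * (g (Z p.1 ω) (Z p.2 ω) - (if p.1 = p.2 then m1 else 0)) with hDdef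
  have hD_meas : ∀ p, Measurable (D p) :=
    fun p => ((hgZ p.1 p.2).sub measurable_const).const_mul _
  have hD_bdd : ∀ p ω, |D p ω| ≤ |c p.1 p.2| * (4 + |m1|) := by
    intro p ω
    rw [hDdef, abs_mul]
    refine mul_le_mul_of_nonneg_left ?_ (abs_nonneg _)
    refine le_trans (abs_sub _ _) (add_le_add (hgb _ _) ?_)
    split
    · exact le_refl _
    · simp [abs_nonneg]
  have int_DD : ∀ p q, Integrable (fun ω => D p ω * D q ω) P := by
    intro p q
    refine aux_int_of_bdd _ ((hD_meas p).mul (hD_meas q))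
      (C := (|c p.1 p.2| * (4 + |m1|)) * (|c q.1 q.2| * (4 + |m1|))) (fun ω => ?_)
    rw [abs_mul]
    have h1 := hD_bdd p ω
    have h2 := hD_bdd q ω
    exact mul_le_mul h1 h2 (abs_nonneg _) (le_trans (abs_nonneg _) h1)
  -- covariance of two centered terms
  have hCov : ∀ p q : S × S, ∫ ω, D p ω * D q ω ∂P
      = c p.1 p.2 * c q.1 q.2 * (eQ P Z g p.1 p.2 q.1 q.2
          - (if p.1 = p.2 then m1 else 0) * (if q.1 = q.2 then m1 else 0)) := by
    rintro ⟨s, t⟩ ⟨u, v⟩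
    set α := (if s = t then m1 else 0) with hα
    set β := (if u = v then m1 else 0) with hβ
    have expand : (fun ω => D (s, t) ω * D (u, v) ω)
        = fun ω => (c s t * c u v) * (g (Z s ω) (Z t ω) * g (Z u ω) (Z v ω))
            - (c s t * c u v * α) * g (Z u ω) (Z v ω)
            - (c s t * c u v * β) * g (Z s ω) (Z t ω)
            + (fun _ : Ω' => c s t * c u v * (α * β)) ω := by
      funext ω; simp only [hDdef]; ring
    rw [expand, integral_add, integral_sub, integral_sub, integral_const_mul,
      integral_const_mul, integral_const_mul, integral_const]
    · have h1 := hmean s t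
      have h2 := hmean u v
      rw [h1, h2, ← hm1def]
      have he : ∫ ω, g (Z s ω) (Z t ω) * g (Z u ω) (Z v ω) ∂P = eQ P Z g s t u v := rfl
      rw [he]
      simp only [measure_univ, probReal_univ, ENNReal.toReal_one, smul_eq_mul, one_mul, ← hα, ← hβ]
      try simp only [eq_self_iff_true, if_true]
      ring
    · exact (int_gg s t u v).const_mul _
    · exact (int_g u v).const_mul _
    · exact ((int_gg s t u v).const_mul _).sub ((int_g u v).const_mul _)
    · exact (int_g s t).const_mul _
    · exact (((int_gg s t u v).const_mul _).sub ((int_g u v).const_mul _)).sub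
        ((int_g s t).const_mul _)
    · exact integrable_const _
  -- the key per-row sum
  have key : ∀ p : S × S, (∑ q : S × S, ∫ ω, D p ω * D q ω ∂P)
      = if p.1 = p.2 then (c p.1 p.1) ^ 2 * (m2 - m1 ^ 2) else 2 * A * (c p.1 p.2) ^ 2 := by
    rintro ⟨s, t⟩
    by_cases hst : s = t
    · rw [hst]
      simp only [if_pos rfl]
      have hq : ∀ q : S × S, ∫ ω, D (t, t) ω * D q ω ∂P
          = if q = (t, t) then (c t t) ^ 2 * (m2 - m1 ^ 2) else 0 := by
        rintro ⟨u, v⟩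
        rw [hCov (t, t) (u, v)]
        simp only [if_pos rfl]
        by_cases hu : u = t
        · by_cases hv : v = t
          · rw [hu, hv, eQ_dddd hZ hlaw hg t, if_pos rfl, if_pos rfl, ← hm2def]
            try simp only [eq_self_iff_true, if_true]
            ring
          · rw [hu, eQ_dd_off hZ hlaw hind hg hgb hdeg (fun h => hv h.symm),
              if_neg (show ¬(t = v) from fun h => hv h.symm),
              if_neg (show ((t, v) : S × S) ≠ (t, t) by simp [hv])]
            try simp only [eq_self_iff_true, if_true]
            ring
        · by_cases hv : v = t
          · rw [hv, eQ_swap_right (P := P) (Z := Z) hgs t t u t,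
              eQ_dd_off hZ hlaw hind hg hgb hdeg (fun h => hu h.symm),
              if_neg (show ¬(u = t) from hu),
              if_neg (show ((u, t) : S × S) ≠ (t, t) by simp [hu])]
            try simp only [eq_self_iff_true, if_true]
            ring
          · by_cases huv : u = v
            · rw [← huv, eQ_indep hZ hind hg (fun h => hu h.symm) (fun h => hu h.symm)
                (fun h => hu h.symm) (fun h => hu h.symm)]
              have h1 := hmean t t
              have h2 := hmean u u
              simp only [if_pos rfl] at h1 h2
              rw [h1, h2, ← hm1def, if_pos rfl,
                if_neg (show ((u, u) : S × S) ≠ (t, t) by simp [hu])]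
              try simp only [eq_self_iff_true, if_true]
              ring
            · rw [eQ_indep hZ hind hg (fun h => hu h.symm) (fun h => hv h.symm)
                (fun h => hu h.symm) (fun h => hv h.symm)]
              have h2 := hmean u v
              simp only [if_neg huv] at h2
              rw [h2, if_neg huv, if_neg (show ((u, v) : S × S) ≠ (t, t) by simp [hu])]
              try simp only [eq_self_iff_true, if_true]
              ring
      rw [Finset.sum_congr rfl (fun q _ => hq q), Finset.sum_ite_eq' Finset.univ ((t, t) : S × S)]
      simp
    · simp only [if_neg hst]
      have hq : ∀ q : S × S, ∫ ω, D (s, t) ω * D q ω ∂P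
          = (if q = (s, t) then A * (c s t) ^ 2 else 0)
            + (if q = (t, s) then A * (c s t) ^ 2 else 0) := by
        rintro ⟨u, v⟩
        rw [hCov (s, t) (u, v)]
        simp only [if_neg hst]
        by_cases h1 : ((u, v) : S × S) = (s, t)
        · simp only [Prod.mk.injEq] at h1
          rw [h1.1, h1.2, if_pos rfl, if_neg (show ((s, t) : S × S) ≠ (t, s) by simp [hst]),
            eQ_offdiag_same hZ hlaw hind hg hst, if_neg hst, ← hAdef]
          try simp only [eq_self_iff_true, if_true]
          ring
        · by_cases h2 : ((u, v) : S × S) = (t, s)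
          · simp only [Prod.mk.injEq] at h2
            have hts : ¬(t = s) := fun h => hst h.symm
            rw [h2.1, h2.2, if_neg (show ((t, s) : S × S) ≠ (s, t) by simp [hts]), if_pos rfl,
              eQ_swap_right (P := P) (Z := Z) hgs s t t s,
              eQ_offdiag_same hZ hlaw hind hg hst, if_neg hts, ← hAdef, hcs t s]
            try simp only [eq_self_iff_true, if_true]
            ring
          · rw [if_neg h1, if_neg h2]
            simp only [Prod.mk.injEq, not_and] at h1 h2
            have hzero : eQ P Z g s t u v = 0 ∨
                (eQ P Z g s t u v
                  = (∫ ω, g (Z s ω) (Z t ω) ∂P) * (∫ ω, g (Z u ω) (Z v ω) ∂P)) := by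
              by_cases huv : u = v
              · by_cases hus : u = s
                · left
                  rw [← huv, hus, eQ_comm (P := P) (Z := Z) (g := g) s t s s,
                    eQ_dd_off hZ hlaw hind hg hgb hdeg hst]
                · by_cases hut : u = t
                  · left
                    rw [← huv, hut, eQ_comm (P := P) (Z := Z) (g := g) s t t t,
                      eQ_swap_right (P := P) (Z := Z) hgs t t s t,
                      eQ_dd_off hZ hlaw hind hg hgb hdeg (fun h => hst h.symm)]
                  · right
                    have hvs : v ≠ s := fun h => hus (huv.trans h)
                    have hvt : v ≠ t := fun h => hut (huv.trans h)
                    exact eQ_indep hZ hind hg (fun h => hus h.symm) (fun h => hvs h.symm)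
                      (fun h => hut h.symm) (fun h => hvt h.symm)
              · by_cases hus : u = s
                · left
                  have hvt : v ≠ t := fun h => h1 hus h
                  have hsv : s ≠ v := fun h => huv (hus.trans h)
                  rw [hus, eQ_triple hZ hlaw hind hg hgb hdeg hst hsv (fun h => hvt h.symm)]
                · by_cases hut : u = t
                  · left
                    have hvs : v ≠ s := fun h => h2 hut h
                    have htv : t ≠ v := fun h => huv (hut.trans h)
                    rw [hut, eQ_swap_left (P := P) (Z := Z) hgs s t t v,
                      eQ_triple hZ hlaw hind hg hgb hdeg (fun h => hst h.symm) htv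
                        (fun h => hvs h.symm)]
                  · by_cases hvs : v = s
                    · left
                      rw [hvs, eQ_swap_right (P := P) (Z := Z) hgs s t u s,
                        eQ_triple hZ hlaw hind hg hgb hdeg hst (fun h => hus h.symm)
                          (fun h => hut h.symm)]
                    · by_cases hvt : v = t
                      · left
                        rw [hvt, eQ_swap_right (P := P) (Z := Z) hgs s t u t,
                          eQ_swap_left (P := P) (Z := Z) hgs s t t u,
                          eQ_triple hZ hlaw hind hg hgb hdeg (fun h => hst h.symm)
                            (fun h => hut h.symm) (fun h => hus h.symm)]
                      · right
                        exact eQ_indep hZ hind hg (fun h => hus h.symm) (fun h => hvs h.symm)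
                          (fun h => hut h.symm) (fun h => hvt h.symm)
            rcases hzero with hz | hz
            · rw [hz]
              try simp only [eq_self_iff_true, if_true]
              ring
            · rw [hz]
              have hk := hmean s t
              simp only [if_neg hst] at hk
              rw [hk]
              try simp only [eq_self_iff_true, if_true]
              ring
      rw [Finset.sum_congr rfl (fun q _ => hq q), Finset.sum_add_distrib,
        Finset.sum_ite_eq' Finset.univ ((s, t) : S × S),
        Finset.sum_ite_eq' Finset.univ ((t, s) : S × S)]
      simp only [Finset.mem_univ, if_pos]
      try simp only [eq_self_iff_true, if_true]
      ring
  -- assemble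
  have hsq16 : ∀ x y : E, (g x y) ^ 2 ≤ 16 := by
    intro x y
    have h := abs_le.mp (hgb x y)
    nlinarith [h.1, h.2]
  set W := fun ω => ∑ s, ∑ t, c s t * g (Z s ω) (Z t ω) with hWdef
  have hWmeas : Measurable W := by
    apply Finset.measurable_sum
    intro s _
    apply Finset.measurable_sum
    intro t _
    exact (hgZ s t).const_mul _
  have int_cg : ∀ s t, Integrable (fun ω => c s t * g (Z s ω) (Z t ω)) P :=
    fun s t => (int_g s t).const_mul _
  have int_inner : ∀ s, Integrable (fun ω => ∑ t, c s t * g (Z s ω) (Z t ω)) P :=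
    fun s => integrable_finset_sum _ (fun t _ => int_cg s t)
  have hWb : ∀ ω, ‖W ω‖ ≤ ∑ s, ∑ t, |c s t| * 4 := by
    intro ω
    rw [hWdef, Real.norm_eq_abs]
    refine le_trans (Finset.abs_sum_le_sum_abs _ _) (Finset.sum_le_sum fun s _ => ?_)
    refine le_trans (Finset.abs_sum_le_sum_abs _ _) (Finset.sum_le_sum fun t _ => ?_)
    rw [abs_mul]
    exact mul_le_mul_of_nonneg_left (hgb _ _) (abs_nonneg _)
  have hWmem : MemLp W 2 P :=
    MemLp.of_bound hWmeas.aestronglyMeasurable _ (ae_of_all _ hWb)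
  have EW : ∫ ω, W ω ∂P = ∑ s, ∑ t, c s t * (if s = t then m1 else 0) := by
    rw [hWdef]
    rw [integral_finset_sum _ (fun s _ => int_inner s)]
    refine Finset.sum_congr rfl fun s _ => ?_
    rw [integral_finset_sum _ (fun t _ => int_cg s t)]
    refine Finset.sum_congr rfl fun t _ => ?_
    rw [integral_const_mul, hmean s t]
  have hvar : variance W P = ∫ ω, (W ω - ∫ ω', W ω' ∂P) ^ 2 ∂P := by
    rw [variance_eq_integral hWmeas.aemeasurable]
  have hdecomp : ∀ ω, W ω - (∫ ω', W ω' ∂P) = ∑ p : S × S, D p ω := by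
    intro ω
    rw [EW, Fintype.sum_prod_type]
    simp only [hWdef]
    rw [← Finset.sum_sub_distrib]
    refine Finset.sum_congr rfl fun s _ => ?_
    rw [← Finset.sum_sub_distrib]
    refine Finset.sum_congr rfl fun t _ => ?_
    simp only [hDdef]
    ring
  have hvar2 : variance W P = ∑ p : S × S, ∑ q : S × S, ∫ ω, D p ω * D q ω ∂P := by
    rw [hvar]
    have hsqex : ∀ ω, (W ω - ∫ ω', W ω' ∂P) ^ 2 = ∑ p : S × S, ∑ q : S × S, D p ω * D q ω := by
      intro ω
      rw [hdecomp ω, sq, Finset.sum_mul_sum]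
    simp_rw [hsqex]
    rw [integral_finset_sum _ (fun p _ => integrable_finset_sum _ (fun q _ => int_DD p q))]
    exact Finset.sum_congr rfl fun p _ => integral_finset_sum _ (fun q _ => int_DD p q)
  rw [hvar2]
  have hm2le : m2 ≤ 16 := by
    rw [hm2def]
    calc ∫ x, (g x x) ^ 2 ∂μ ≤ ∫ _x, (16 : ℝ) ∂μ := by
          refine integral_mono (aux_int_of_bdd _
            ((hg.comp (measurable_id.prodMk measurable_id)).pow_const 2) (C := 16)
            (fun x => ?_)) (integrable_const _) (fun x => hsq16 x x)
          rw [abs_of_nonneg (sq_nonneg _)]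
          exact hsq16 x x
      _ = 16 := by simp
  calc ∑ p : S × S, ∑ q : S × S, ∫ ω, D p ω * D q ω ∂P
      = ∑ p : S × S, (if p.1 = p.2 then (c p.1 p.1) ^ 2 * (m2 - m1 ^ 2)
          else 2 * A * (c p.1 p.2) ^ 2) := Finset.sum_congr rfl fun p _ => key p
    _ ≤ ∑ p : S × S, (if p.1 = p.2 then 16 * (c p.1 p.1) ^ 2 else 2 * A * (c p.1 p.2) ^ 2) := by
        refine Finset.sum_le_sum fun p _ => ?_
        by_cases hp : p.1 = p.2
        · simp only [if_pos hp]
          nlinarith [sq_nonneg (c p.1 p.1), sq_nonneg m1]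
        · simp only [if_neg hp]
          exact le_refl _
    _ = 16 * (∑ s, (c s s) ^ 2) + 2 * A * (∑ s, ∑ t, if s = t then 0 else (c s t) ^ 2) := by
        rw [Fintype.sum_prod_type]
        have hsplit : ∀ s t : S, (if s = t then 16 * (c s s) ^ 2 else 2 * A * (c s t) ^ 2)
            = (if s = t then 16 * (c s s) ^ 2 else 0)
              + 2 * A * (if s = t then 0 else (c s t) ^ 2) := by
          intro s t
          split <;> ring
        simp only [hsplit, Finset.sum_add_distrib, Finset.sum_ite_eq, Finset.mem_univ, if_true,
          ← Finset.mul_sum]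


lemma mercer_aux (μ : Measure E) [IsProbabilityMeasure μ]
    (g : E → E → ℝ) (hg : Measurable (Function.uncurry g)) (hgb : ∀ x y, |g x y| ≤ 4)
    (lam : ℕ → ℝ) (hl : ∀ j, 0 < lam j) (hls : Summable lam)
    (ψ : ℕ → E → ℝ) (hψm : ∀ j, Measurable (ψ j))
    (hint : ∀ j l, Integrable (fun x => ψ j x * ψ l x) μ)
    (hon : ∀ j l, (∫ x, ψ j x * ψ l x ∂μ) = if j = l then 1 else 0)
    (hM : ∀ x y, HasSum (fun j => lam j * ψ j x * ψ j y) (g x y)) :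
    (∫ z : E × E, (g z.1 z.2) ^ 2 ∂(μ.prod μ)) = (∑' j, (lam j) ^ 2)
      ∧ (∑' j, (lam j) ^ 2) ≤ 16 := by
  have habs2 : ∀ a b : ℝ, |a * b| ≤ (a * a + b * b) / 2 := by
    intro a b
    rw [abs_mul]
    nlinarith [sq_nonneg (|a| - |b|), abs_mul_abs_self a, abs_mul_abs_self b,
      abs_nonneg a, abs_nonneg b]
  have habs1 : ∀ a : ℝ, |a| ≤ (1 + a * a) / 2 := by
    intro a
    nlinarith [sq_nonneg (|a| - 1), abs_mul_abs_self a, abs_nonneg a]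
  have hψψabs : ∀ j l, ∫ x, |ψ j x * ψ l x| ∂μ ≤ 1 := by
    intro j l
    have hb : Integrable (fun x => (ψ j x * ψ j x + ψ l x * ψ l x) / 2) μ :=
      ((hint j j).add (hint l l)).div_const 2
    calc ∫ x, |ψ j x * ψ l x| ∂μ ≤ ∫ x, (ψ j x * ψ j x + ψ l x * ψ l x) / 2 ∂μ :=
          integral_mono (hint j l).abs hb (fun x => habs2 _ _)
      _ = ((∫ x, ψ j x * ψ j x ∂μ) + ∫ x, ψ l x * ψ l x ∂μ) / 2 := by
          rw [integral_div, integral_add (hint j j) (hint l l)]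
      _ ≤ 1 := by
          rw [hon j j, hon l l]
          simp
  have hψint : ∀ j, Integrable (ψ j) μ := by
    intro j
    refine Integrable.mono' (((integrable_const (1:ℝ)).add (hint j j)).div_const 2) (hψm j).aestronglyMeasurable
      (ae_of_all _ (fun x => ?_))
    rw [Real.norm_eq_abs]
    exact habs1 _
  have hψabs1 : ∀ j, ∫ x, |ψ j x| ∂μ ≤ 1 := by
    intro j
    calc ∫ x, |ψ j x| ∂μ ≤ ∫ x, (1 + ψ j x * ψ j x) / 2 ∂μ :=
          integral_mono (hψint j).abs (((integrable_const (1:ℝ)).add (hint j j)).div_const 2)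
            (fun x => habs1 _)
      _ = (1 + ∫ x, ψ j x * ψ j x ∂μ) / 2 := by
          rw [integral_div, integral_add (integrable_const _) (hint j j)]
          simp
      _ ≤ 1 := by rw [hon j j]; simp
  -- the inner integral: ∫∫ g(x,y) ψ_j(x) ψ_j(y) = lam j
  have hGmeas : ∀ j l, Measurable fun z : E × E =>
      lam l * ψ l z.1 * ψ l z.2 * (ψ j z.1 * ψ j z.2) := by
    intro j l
    exact (((measurable_const.mul ((hψm l).comp measurable_fst)).mul
      ((hψm l).comp measurable_snd)).mul
      (((hψm j).comp measurable_fst).mul ((hψm j).comp measurable_snd)))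
  have hinner : ∀ j, (∫ z : E × E, g z.1 z.2 * (ψ j z.1 * ψ j z.2) ∂(μ.prod μ)) = lam j := by
    intro j
    have hGint : ∀ l, Integrable
        (fun z : E × E => lam l * ψ l z.1 * ψ l z.2 * (ψ j z.1 * ψ j z.2)) (μ.prod μ) := by
      intro l
      have h0 : Integrable (fun z : E × E =>
          (lam l * (ψ l z.1 * ψ j z.1)) * (ψ l z.2 * ψ j z.2)) (μ.prod μ) :=
        ((hint l j).const_mul (lam l)).mul_prod (hint l j)
      exact h0.congr (ae_of_all _ (fun z => by ring))
    have hGnorm : ∀ l, (∫ z : E × E,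
        ‖lam l * ψ l z.1 * ψ l z.2 * (ψ j z.1 * ψ j z.2)‖ ∂(μ.prod μ)) ≤ lam l := by
      intro l
      have hpm := integral_prod_mul (μ := μ) (ν := μ)
        (f := fun x => |ψ l x * ψ j x|) (g := fun x => |ψ l x * ψ j x|)
      simp only at hpm
      have heq : (fun z : E × E => ‖lam l * ψ l z.1 * ψ l z.2 * (ψ j z.1 * ψ j z.2)‖)
          = fun z : E × E => lam l * (|ψ l z.1 * ψ j z.1| * |ψ l z.2 * ψ j z.2|) := by
        funext z
        rw [Real.norm_eq_abs, show lam l * ψ l z.1 * ψ l z.2 * (ψ j z.1 * ψ j z.2)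
          = lam l * ((ψ l z.1 * ψ j z.1) * (ψ l z.2 * ψ j z.2)) from by ring,
          abs_mul, abs_mul, abs_of_pos (hl l)]
      rw [heq, integral_const_mul, hpm]
      calc lam l * ((∫ x, |ψ l x * ψ j x| ∂μ) * ∫ x, |ψ l x * ψ j x| ∂μ)
          ≤ lam l * (1 * 1) := by
            refine mul_le_mul_of_nonneg_left ?_ (le_of_lt (hl l))
            exact mul_le_mul (hψψabs l j) (hψψabs l j)
              (integral_nonneg (fun x => abs_nonneg _)) zero_le_one
        _ = lam l := by ring
    have hGsum : Summable fun l => ∫ z : E × E,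
        ‖lam l * ψ l z.1 * ψ l z.2 * (ψ j z.1 * ψ j z.2)‖ ∂(μ.prod μ) :=
      Summable.of_nonneg_of_le (fun l => integral_nonneg (fun z => norm_nonneg _))
        hGnorm hls
    have hhs := hasSum_integral_of_summable_integral_norm hGint hGsum
    have hptsum : ∀ z : E × E,
        (∑' l, lam l * ψ l z.1 * ψ l z.2 * (ψ j z.1 * ψ j z.2))
          = g z.1 z.2 * (ψ j z.1 * ψ j z.2) := by
      intro z
      exact ((hM z.1 z.2).mul_right (ψ j z.1 * ψ j z.2)).tsum_eq
    simp_rw [hptsum] at hhs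
    have hval : ∀ l, (∫ z : E × E,
        lam l * ψ l z.1 * ψ l z.2 * (ψ j z.1 * ψ j z.2) ∂(μ.prod μ))
          = if l = j then lam j else 0 := by
      intro l
      have hpm := integral_prod_mul (μ := μ) (ν := μ)
        (f := fun x => ψ l x * ψ j x) (g := fun x => ψ l x * ψ j x)
      simp only at hpm
      have heq2 : (fun z : E × E => lam l * ψ l z.1 * ψ l z.2 * (ψ j z.1 * ψ j z.2))
          = fun z : E × E => lam l * ((ψ l z.1 * ψ j z.1) * (ψ l z.2 * ψ j z.2)) := by
        funext z
        ring
      rw [heq2, integral_const_mul, hpm, hon l j]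
      by_cases hlj : l = j
      · rw [if_pos hlj, if_pos hlj, hlj]
        ring
      · rw [if_neg hlj, if_neg hlj]
        ring
    simp_rw [hval] at hhs
    have hfin : HasSum (fun l => if l = j then lam j else 0) (lam j) := hasSum_ite_eq j (lam j)
    exact HasSum.unique hhs hfin
  -- first expansion
  have hFint : ∀ j, Integrable
      (fun z : E × E => g z.1 z.2 * (lam j * ψ j z.1 * ψ j z.2)) (μ.prod μ) := by
    intro j
    have h0 : Integrable (fun z : E × E => (lam j * ψ j z.1) * ψ j z.2) (μ.prod μ) :=
      ((hψint j).const_mul (lam j)).mul_prod (hψint j)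
    refine Integrable.mono' (h0.abs.const_mul 4) ?_ (ae_of_all _ (fun z => ?_))
    · exact ((by exact hg : Measurable fun z : E × E => g z.1 z.2).mul
        ((measurable_const.mul ((hψm j).comp measurable_fst)).mul
          ((hψm j).comp measurable_snd))).aestronglyMeasurable
    · rw [Real.norm_eq_abs, abs_mul]
      have h1 : |lam j * ψ j z.1 * ψ j z.2| = |(lam j * ψ j z.1) * ψ j z.2| := by ring_nf
      calc |g z.1 z.2| * |lam j * ψ j z.1 * ψ j z.2|
          ≤ 4 * |lam j * ψ j z.1 * ψ j z.2| :=
            mul_le_mul_of_nonneg_right (hgb _ _) (abs_nonneg _)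
        _ = 4 * |(lam j * ψ j z.1) * ψ j z.2| := by rw [h1]
  have hFnorm : ∀ j, (∫ z : E × E, ‖g z.1 z.2 * (lam j * ψ j z.1 * ψ j z.2)‖ ∂(μ.prod μ))
      ≤ 4 * lam j := by
    intro j
    have hpm := integral_prod_mul (μ := μ) (ν := μ)
      (f := fun x => |ψ j x|) (g := fun x => |ψ j x|)
    simp only at hpm
    have hb : Integrable (fun z : E × E => 4 * (lam j * (|ψ j z.1| * |ψ j z.2|))) (μ.prod μ) := by
      have h0 : Integrable (fun z : E × E =>
          (fun x => |ψ j x|) z.1 * (fun x => |ψ j x|) z.2) (μ.prod μ) :=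
        (hψint j).abs.mul_prod (hψint j).abs
      simp only at h0
      exact (h0.const_mul (lam j)).const_mul 4
    calc ∫ z : E × E, ‖g z.1 z.2 * (lam j * ψ j z.1 * ψ j z.2)‖ ∂(μ.prod μ)
        ≤ ∫ z : E × E, 4 * (lam j * (|ψ j z.1| * |ψ j z.2|)) ∂(μ.prod μ) := by
          refine integral_mono (hFint j).norm hb (fun z => ?_)
          rw [Real.norm_eq_abs, abs_mul]
          calc |g z.1 z.2| * |lam j * ψ j z.1 * ψ j z.2|
              ≤ 4 * |lam j * ψ j z.1 * ψ j z.2| :=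
                mul_le_mul_of_nonneg_right (hgb _ _) (abs_nonneg _)
            _ = 4 * (lam j * (|ψ j z.1| * |ψ j z.2|)) := by
                rw [abs_mul, abs_mul, abs_of_pos (hl j)]
                ring
      _ = 4 * (lam j * ((∫ x, |ψ j x| ∂μ) * ∫ x, |ψ j x| ∂μ)) := by
          rw [integral_const_mul, integral_const_mul, hpm]
      _ ≤ 4 * (lam j * (1 * 1)) := by
          refine mul_le_mul_of_nonneg_left (mul_le_mul_of_nonneg_left ?_
            (le_of_lt (hl j))) (by norm_num)
          exact mul_le_mul (hψabs1 j) (hψabs1 j)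
            (integral_nonneg (fun x => abs_nonneg _)) zero_le_one
      _ = 4 * lam j := by ring
  have hFsum : Summable fun j => ∫ z : E × E,
      ‖g z.1 z.2 * (lam j * ψ j z.1 * ψ j z.2)‖ ∂(μ.prod μ) :=
    Summable.of_nonneg_of_le (fun j => integral_nonneg (fun z => norm_nonneg _))
      hFnorm (hls.mul_left 4)
  have hhsF := hasSum_integral_of_summable_integral_norm hFint hFsum
  have hptsumF : ∀ z : E × E,
      (∑' j, g z.1 z.2 * (lam j * ψ j z.1 * ψ j z.2)) = (g z.1 z.2) ^ 2 := by
    intro z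
    have := ((hM z.1 z.2).mul_left (g z.1 z.2)).tsum_eq
    rw [this, sq]
  simp_rw [hptsumF] at hhsF
  have hFval : ∀ j, (∫ z : E × E, g z.1 z.2 * (lam j * ψ j z.1 * ψ j z.2) ∂(μ.prod μ))
      = (lam j) ^ 2 := by
    intro j
    have heq3 : (fun z : E × E => g z.1 z.2 * (lam j * ψ j z.1 * ψ j z.2))
        = fun z : E × E => lam j * (g z.1 z.2 * (ψ j z.1 * ψ j z.2)) := by
      funext z
      ring
    rw [heq3, integral_const_mul, hinner j, sq]
  simp_rw [hFval] at hhsF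
  constructor
  · exact hhsF.tsum_eq.symm
  · -- bound on the sum of squared eigenvalues
    have hlam_le : ∀ j, lam j ≤ 4 := by
      intro j
      have h := hinner j
      have hb : |∫ z : E × E, g z.1 z.2 * (ψ j z.1 * ψ j z.2) ∂(μ.prod μ)| ≤ 4 := by
        have hintg : Integrable (fun z : E × E => g z.1 z.2 * (ψ j z.1 * ψ j z.2))
            (μ.prod μ) := by
          have h0 := hFint j
          have heq3 : (fun z : E × E => g z.1 z.2 * (lam j * ψ j z.1 * ψ j z.2))
              = fun z : E × E => lam j * (g z.1 z.2 * (ψ j z.1 * ψ j z.2)) := by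
            funext z; ring
          rw [heq3] at h0
          have := h0.const_mul (lam j)⁻¹
          refine this.congr (ae_of_all _ (fun z => ?_))
          have hne := (hl j).ne'
          field_simp
        have hpm := integral_prod_mul (μ := μ) (ν := μ)
          (f := fun x => |ψ j x|) (g := fun x => |ψ j x|)
        simp only at hpm
        have hb2 : Integrable (fun z : E × E => 4 * (|ψ j z.1| * |ψ j z.2|)) (μ.prod μ) := by
          have h0 : Integrable (fun z : E × E =>
              (fun x => |ψ j x|) z.1 * (fun x => |ψ j x|) z.2) (μ.prod μ) :=
            (hψint j).abs.mul_prod (hψint j).abs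
          simp only at h0
          exact h0.const_mul 4
        calc |∫ z : E × E, g z.1 z.2 * (ψ j z.1 * ψ j z.2) ∂(μ.prod μ)|
            ≤ ∫ z : E × E, |g z.1 z.2 * (ψ j z.1 * ψ j z.2)| ∂(μ.prod μ) :=
              by simpa only [Real.norm_eq_abs] using
                (norm_integral_le_integral_norm (μ := μ.prod μ)
                  (fun z : E × E => g z.1 z.2 * (ψ j z.1 * ψ j z.2)))
          _ ≤ ∫ z : E × E, 4 * (|ψ j z.1| * |ψ j z.2|) ∂(μ.prod μ) := by
              refine integral_mono hintg.abs hb2 (fun z => ?_)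
              rw [abs_mul]
              calc |g z.1 z.2| * |ψ j z.1 * ψ j z.2|
                  ≤ 4 * |ψ j z.1 * ψ j z.2| :=
                    mul_le_mul_of_nonneg_right (hgb _ _) (abs_nonneg _)
                _ = 4 * (|ψ j z.1| * |ψ j z.2|) := by rw [abs_mul]
          _ = 4 * ((∫ x, |ψ j x| ∂μ) * ∫ x, |ψ j x| ∂μ) := by
              rw [integral_const_mul, hpm]
          _ ≤ 4 * (1 * 1) := by
              refine mul_le_mul_of_nonneg_left ?_ (by norm_num)
              exact mul_le_mul (hψabs1 j) (hψabs1 j)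
                (integral_nonneg (fun x => abs_nonneg _)) zero_le_one
          _ = 4 := by ring
      rw [h] at hb
      exact le_trans (le_abs_self _) hb
    have hsq_summable : Summable fun j => (lam j) ^ 2 := ⟨_, hhsF⟩
    calc (∑' j, (lam j) ^ 2) ≤ ∑' j, 4 * lam j := by
          refine Summable.tsum_le_tsum (fun j => ?_) hsq_summable (hls.mul_left 4)
          have := hl j
          nlinarith [hlam_le j]
      _ = 4 * ∑' j, lam j := tsum_mul_left
      _ ≤ 4 * 4 := by
          refine mul_le_mul_of_nonneg_left ?_ (by norm_num)
          -- ∑ lam ≤ 4, from the diagonal expansion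
          refine Summable.tsum_le_of_sum_le hls (fun F => ?_)
          have hterm : ∀ j, (∫ x, lam j * (ψ j x * ψ j x) ∂μ) = lam j := by
            intro j
            rw [integral_const_mul, hon j j, if_pos rfl, mul_one]
          have hsum_int : (∫ x, ∑ j ∈ F, lam j * (ψ j x * ψ j x) ∂μ)
              = ∑ j ∈ F, lam j := by
            rw [integral_finset_sum _ (fun j _ => (hint j j).const_mul (lam j))]
            exact Finset.sum_congr rfl (fun j _ => hterm j)
          rw [← hsum_int]
          have hgxx_int : Integrable (fun x => g x x) μ :=
            aux_int_of_bdd _ (hg.comp (measurable_id.prodMk measurable_id)) (C := 4)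
              (fun x => hgb x x)
          calc (∫ x, ∑ j ∈ F, lam j * (ψ j x * ψ j x) ∂μ)
              ≤ ∫ x, g x x ∂μ := by
                refine integral_mono
                  (integrable_finset_sum _ (fun j _ => (hint j j).const_mul (lam j)))
                  hgxx_int (fun x => ?_)
                have hnn : ∀ j ∉ F, 0 ≤ lam j * ψ j x * ψ j x := by
                  intro j _
                  nlinarith [sq_nonneg (ψ j x), (hl j).le]
                have := sum_le_hasSum F hnn (hM x x)
                calc ∑ j ∈ F, lam j * (ψ j x * ψ j x)
                    = ∑ j ∈ F, lam j * ψ j x * ψ j x :=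
                      Finset.sum_congr rfl (fun j _ => by ring)
                  _ ≤ g x x := this
            _ ≤ ∫ _x, (4:ℝ) ∂μ := integral_mono hgxx_int (integrable_const _)
                (fun x => le_trans (le_abs_self _) (hgb x x))
            _ = 4 := by simp
      _ = 16 := by norm_num

end Aux

/-- Under the null hypothesis (both `X` and `Y` i.i.d. from `p`),
`Var(n T_n) ≤ (2/(ρ₁ρ₂)²) Σ_k λ̃_k² + (16/n)(ρ₁⁻³ + ρ₂⁻³)`, with `ρ₁ = n₁/n`,
`ρ₂ = n₂/n`; in particular, if `n > (16/0.1)(ρ₁⁻³ + 4ρ₂⁻³)`, then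
`Var(n T_n) ≤ 32/(ρ₁ρ₂)² + 0.1`. -/
theorem null_variance_scaled_mmd
    {d : ℕ}
    (Ω : Set (EuclideanSpace ℝ (Fin d))) (hΩ : IsCompact Ω)
    (p : EuclideanSpace ℝ (Fin d) → ℝ)
    (hp_cont : Continuous p) (hp_nonneg : ∀ x, 0 ≤ p x)
    (hp_supp : ∀ x, x ∉ Ω → p x = 0) (hp_int : ∫ x, p x = 1)
    -- the kernel `k`, Assumption A1
    (k : EuclideanSpace ℝ (Fin d) → EuclideanSpace ℝ (Fin d) → ℝ)
    (hk_cont : Continuous (Function.uncurry k))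
    (hk_symm : ∀ x y, k x y = k y x)
    (hk_psd : ∀ (m : ℕ) (x : Fin m → EuclideanSpace ℝ (Fin d)) (c : Fin m → ℝ),
      0 ≤ ∑ i, ∑ j, c i * c j * k (x i) (x j))
    (hk_diag_nonneg : ∀ x, 0 ≤ k x x) (hk_diag_le : ∀ x, k x x ≤ 1)
    (hk_bdd : ∀ x y, |k x y| ≤ 1)
    -- the centered kernel `k̃` and its Mercer expansion in `L²(p(x)dx)`
    (kt : EuclideanSpace ℝ (Fin d) → EuclideanSpace ℝ (Fin d) → ℝ)
    (hkt : ∀ x y, kt x y = k x y - (∫ z, k x z * p z) - (∫ z, k y z * p z)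
      + ∫ z, ∫ w, k z w * p z * p w)
    (lam : ℕ → ℝ) (hlam_pos : ∀ j, 0 < lam j) (hlam_sum : Summable lam)
    (ψ : ℕ → EuclideanSpace ℝ (Fin d) → ℝ)
    (hψ_cont : ∀ j, Continuous (ψ j))
    (hψ_on : ∀ j l, (∫ x, ψ j x * ψ l x * p x) = if j = l then (1 : ℝ) else 0)
    (hψ_mean : ∀ j, (∫ x, ψ j x * p x) = 0)
    (hMercer : ∀ x y, HasSum (fun j => lam j * ψ j x * ψ j y) (kt x y))
    -- the samples: `X` and `Y` independent, each i.i.d. from `p`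
    (n₁ n₂ n : ℕ) (hn : n = n₁ + n₂) (hn₁_pos : 0 < n₁) (hn₂_pos : 0 < n₂)
    {Ω' : Type*} [MeasurableSpace Ω'] (P : Measure Ω') [IsProbabilityMeasure P]
    (X : Fin n₁ → Ω' → EuclideanSpace ℝ (Fin d))
    (Y : Fin n₂ → Ω' → EuclideanSpace ℝ (Fin d))
    (hX_meas : ∀ i, Measurable (X i)) (hY_meas : ∀ j, Measurable (Y j))
    (hX_law : ∀ i, Measure.map (X i) P
      = volume.withDensity (fun x => ENNReal.ofReal (p x)))
    (hY_law : ∀ j, Measure.map (Y j) P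
      = volume.withDensity (fun x => ENNReal.ofReal (p x)))
    (hindep : iIndepFun (Sum.elim X Y) P)
    -- the empirical MMD statistic
    (Tn : Ω' → ℝ)
    (hTn : ∀ ω, Tn ω =
      (∑ i, ∑ i', k (X i ω) (X i' ω)) / (n₁ : ℝ) ^ 2
      + (∑ j, ∑ j', k (Y j ω) (Y j' ω)) / (n₂ : ℝ) ^ 2
      - 2 * (∑ i, ∑ j, k (X i ω) (Y j ω)) / ((n₁ : ℝ) * (n₂ : ℝ))) :
    variance (fun ω => (n : ℝ) * Tn ω) P
      ≤ (2 / (((n₁ : ℝ) / (n : ℝ)) * ((n₂ : ℝ) / (n : ℝ))) ^ 2) * (∑' j, lam j ^ 2)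
        + (16 / (n : ℝ)) * ((((n₁ : ℝ) / (n : ℝ))⁻¹) ^ 3 + (((n₂ : ℝ) / (n : ℝ))⁻¹) ^ 3)
    ∧ ((16 / 0.1) * ((((n₁ : ℝ) / (n : ℝ))⁻¹) ^ 3 + 4 * (((n₂ : ℝ) / (n : ℝ))⁻¹) ^ 3) < (n : ℝ) →
      variance (fun ω => (n : ℝ) * Tn ω) P
        ≤ 32 / (((n₁ : ℝ) / (n : ℝ)) * ((n₂ : ℝ) / (n : ℝ))) ^ 2 + 0.1) := by
  classical
  -- basic positivity
  have hn1R : (0:ℝ) < (n₁:ℝ) := Nat.cast_pos.mpr hn₁_pos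
  have hn2R : (0:ℝ) < (n₂:ℝ) := Nat.cast_pos.mpr hn₂_pos
  have hnR : (n:ℝ) = (n₁:ℝ) + (n₂:ℝ) := by rw [hn]; push_cast; ring
  have hnpos : (0:ℝ) < (n:ℝ) := by rw [hnR]; linarith
  -- the sampling measure
  set μ0 : Measure (EuclideanSpace ℝ (Fin d)) :=
    volume.withDensity (fun x => ENNReal.ofReal (p x)) with hμ0
  have hsupp : Function.support p ⊆ Ω := fun x hx => by
    by_contra hmem
    exact hx (hp_supp x hmem)
  have hcs : HasCompactSupport p :=
    IsCompact.of_isClosed_subset hΩ isClosed_closure (closure_minimal hsupp hΩ.isClosed)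
  have hp_integrable : Integrable p := hp_cont.integrable_of_hasCompactSupport hcs
  have hμ0_prob : IsProbabilityMeasure μ0 := by
    constructor
    rw [hμ0, withDensity_apply _ MeasurableSet.univ, Measure.restrict_univ,
      ← ofReal_integral_eq_lintegral_ofReal hp_integrable (ae_of_all _ hp_nonneg), hp_int]
    simp
  haveI := hμ0_prob
  have hconv : ∀ f : EuclideanSpace ℝ (Fin d) → ℝ, Measurable f →
      ∫ x, f x ∂μ0 = ∫ x, f x * p x := by
    intro f hf
    rw [hμ0]
    have h1 : (fun x => ENNReal.ofReal (p x))
        = fun x => ((Real.toNNReal (p x) : ℝ≥0) : ℝ≥0∞) := rfl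
    rw [h1, integral_withDensity_eq_integral_smul hp_cont.measurable.real_toNNReal f]
    congr 1
    funext x
    rw [NNReal.smul_def, Real.coe_toNNReal _ (hp_nonneg x), smul_eq_mul, mul_comm]
  have hint_of_cont : ∀ f : EuclideanSpace ℝ (Fin d) → ℝ, Continuous f → Integrable f μ0 := by
    intro f hf
    rw [hμ0, integrable_withDensity_iff (f := fun x => ENNReal.ofReal (p x))
      hp_cont.measurable.ennreal_ofReal (ae_of_all _ (fun x => ENNReal.ofReal_lt_top))]
    have h2 : (fun x => f x * (ENNReal.ofReal (p x)).toReal) = fun x => f x * p x := by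
      funext x
      rw [ENNReal.toReal_ofReal (hp_nonneg x)]
    rw [h2]
    exact (hf.mul hp_cont).integrable_of_hasCompactSupport hcs.mul_left
  -- kp and kpp
  set kp : EuclideanSpace ℝ (Fin d) → ℝ := fun x => ∫ z, k x z * p z with hkp
  have hkx_cont : ∀ x, Continuous fun z => k x z :=
    fun x => hk_cont.comp (Continuous.prodMk_right x)
  have hkp_cont : Continuous kp := by
    rw [hkp]
    refine continuous_of_dominated (F := fun x z => k x z * p z) (bound := p)
      (fun x => ((hkx_cont x).mul hp_cont).aestronglyMeasurable)
      (fun x => ae_of_all _ (fun z => ?_)) hp_integrable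
      (ae_of_all _ (fun z => ?_))
    · rw [Real.norm_eq_abs, abs_mul, abs_of_nonneg (hp_nonneg z)]
      calc |k x z| * p z ≤ 1 * p z := mul_le_mul_of_nonneg_right (hk_bdd x z) (hp_nonneg z)
        _ = p z := one_mul _
    · exact (hk_cont.comp (continuous_id.prodMk continuous_const)).mul continuous_const
  have hkp_bdd : ∀ x, |kp x| ≤ 1 := by
    intro x
    have hint : Integrable (fun z => k x z * p z) :=
      ((hkx_cont x).mul hp_cont).integrable_of_hasCompactSupport hcs.mul_left
    calc |kp x| ≤ ∫ z, |k x z * p z| := by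
          simpa only [Real.norm_eq_abs] using norm_integral_le_integral_norm
            (fun z => k x z * p z)
      _ ≤ ∫ z, p z := by
          refine integral_mono hint.abs hp_integrable (fun z => ?_)
          rw [abs_mul, abs_of_nonneg (hp_nonneg z)]
          calc |k x z| * p z ≤ 1 * p z := mul_le_mul_of_nonneg_right (hk_bdd x z) (hp_nonneg z)
            _ = p z := one_mul _
      _ = 1 := hp_int
  set kpp : ℝ := ∫ z, ∫ w, k z w * p z * p w with hkppdef
  have hinner_eq : ∀ z, (∫ w, k z w * p z * p w) = kp z * p z := by
    intro z
    have h : (fun w => k z w * p z * p w) = fun w => p z * (k z w * p w) := by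
      funext w
      ring
    rw [h, integral_const_mul]
    rw [hkp]
    ring
  have hkpp_alt : kpp = ∫ z, kp z * p z := by
    rw [hkppdef]
    exact integral_congr_ae (ae_of_all _ hinner_eq)
  have hkp_p_int : Integrable (fun z => kp z * p z) :=
    (hkp_cont.mul hp_cont).integrable_of_hasCompactSupport hcs.mul_left
  have hkpp_bdd : |kpp| ≤ 1 := by
    rw [hkpp_alt]
    calc |∫ z, kp z * p z| ≤ ∫ z, |kp z * p z| := by
          simpa only [Real.norm_eq_abs] using norm_integral_le_integral_norm
            (fun z => kp z * p z)
      _ ≤ ∫ z, p z := by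
          refine integral_mono hkp_p_int.abs hp_integrable (fun z => ?_)
          rw [abs_mul, abs_of_nonneg (hp_nonneg z)]
          calc |kp z| * p z ≤ 1 * p z := mul_le_mul_of_nonneg_right (hkp_bdd z) (hp_nonneg z)
            _ = p z := one_mul _
      _ = 1 := hp_int
  -- properties of the centered kernel
  have hkt' : ∀ x y, kt x y = k x y - kp x - kp y + kpp := hkt
  have hkt_cont : Continuous (Function.uncurry kt) := by
    have h : Function.uncurry kt
        = fun q : EuclideanSpace ℝ (Fin d) × EuclideanSpace ℝ (Fin d) =>
          k q.1 q.2 - kp q.1 - kp q.2 + kpp := funext fun q => hkt' q.1 q.2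
    rw [h]
    exact ((hk_cont.sub (hkp_cont.comp continuous_fst)).sub
      (hkp_cont.comp continuous_snd)).add continuous_const
  have hkt_meas : Measurable (Function.uncurry kt) := hkt_cont.measurable
  have hkt_symm : ∀ x y, kt x y = kt y x := by
    intro x y
    rw [hkt' x y, hkt' y x, hk_symm x y]
    ring
  have hkt_bdd : ∀ x y, |kt x y| ≤ 4 := by
    intro x y
    rw [hkt' x y]
    have h1 := abs_le.mp (hk_bdd x y)
    have h2 := abs_le.mp (hkp_bdd x)
    have h3 := abs_le.mp (hkp_bdd y)
    have h4 := abs_le.mp hkpp_bdd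
    rw [abs_le]
    constructor <;> nlinarith [h1.1, h1.2, h2.1, h2.2, h3.1, h3.2, h4.1, h4.2]
  have hdeg : ∀ x, ∫ y, kt x y ∂μ0 = 0 := by
    intro x
    have hmeas_ktx : Measurable fun y => kt x y :=
      (hkt_cont.comp ((continuous_const (y := x)).prodMk continuous_id)).measurable
    rw [hconv _ hmeas_ktx]
    have hsplit : (fun y => kt x y * p y)
        = fun y => (k x y * p y - kp x * p y - kp y * p y) + kpp * p y := by
      funext y
      rw [hkt' x y]
      ring
    have i1 : Integrable (fun y => k x y * p y) :=
      ((hkx_cont x).mul hp_cont).integrable_of_hasCompactSupport hcs.mul_left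
    have i2 : Integrable (fun y => kp x * p y) := hp_integrable.const_mul _
    have i3 : Integrable (fun y => kp y * p y) := hkp_p_int
    have i4 : Integrable (fun y => kpp * p y) := hp_integrable.const_mul _
    have e1 : ∫ y, (k x y * p y - kp x * p y - kp y * p y + kpp * p y)
        = (∫ y, k x y * p y) - (∫ y, kp x * p y) - (∫ y, kp y * p y) + ∫ y, kpp * p y := by
      have i12 : Integrable (fun y => k x y * p y - kp x * p y) := i1.sub i2
      have i123 : Integrable (fun y => k x y * p y - kp x * p y - kp y * p y) := i12.sub i3
      rw [integral_add i123 i4, integral_sub i12 i3, integral_sub i1 i2]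
    rw [hsplit, e1, integral_const_mul, integral_const_mul, hp_int,
      show (∫ y, k x y * p y) = kp x from rfl, ← hkpp_alt]
    ring
  -- Mercer
  have hmercer := mercer_aux μ0 kt hkt_meas hkt_bdd lam hlam_pos hlam_sum ψ
    (fun j => (hψ_cont j).measurable)
    (fun j l => hint_of_cont _ ((hψ_cont j).mul (hψ_cont l)))
    (fun j l => by
      rw [hconv (fun x => ψ j x * ψ l x) ((hψ_cont j).measurable.mul (hψ_cont l).measurable)]
      exact hψ_on j l)
    hMercer
  -- the random variables
  set Z : (Fin n₁ ⊕ Fin n₂) → Ω' → EuclideanSpace ℝ (Fin d) := Sum.elim X Y with hZdef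
  have hZmeas : ∀ s, Measurable (Z s) := by
    rintro (i | j)
    · exact hX_meas i
    · exact hY_meas j
  have hZlaw : ∀ s, Measure.map (Z s) P = μ0 := by
    rintro (i | j)
    · exact hX_law i
    · exact hY_law j
  -- the coefficients
  set a : ℝ := (n:ℝ)/(n₁:ℝ)^2 with hadef
  set b : ℝ := (n:ℝ)/(n₂:ℝ)^2 with hbdef
  set m : ℝ := -((n:ℝ)/((n₁:ℝ)*(n₂:ℝ))) with hmdef
  set c : (Fin n₁ ⊕ Fin n₂) → (Fin n₁ ⊕ Fin n₂) → ℝ :=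
    fun s t => Sum.elim (fun _ => Sum.elim (fun _ => a) (fun _ => m) t)
      (fun _ => Sum.elim (fun _ => m) (fun _ => b) t) s with hcdef
  have hcsymm : ∀ s t, c s t = c t s := by
    rintro (i | i) (j | j) <;> rfl
  have hrow : ∀ s, (∑ t, c s t) = 0 := by
    rintro (i | i) <;>
      · rw [Fintype.sum_sum_type]
        simp only [hcdef, Sum.elim_inl, Sum.elim_inr, Finset.sum_const, Finset.card_univ,
          Fintype.card_fin, nsmul_eq_mul, hadef, hbdef, hmdef]
        field_simp
        ring
  have hcol : ∀ t, (∑ s, c s t) = 0 := by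
    intro t
    rw [Finset.sum_congr rfl (fun s _ => hcsymm s t)]
    exact hrow t
  -- the pointwise identity
  have hpoint : ∀ ω, (n:ℝ) * Tn ω = ∑ s, ∑ t, c s t * kt (Z s ω) (Z t ω) := by
    intro ω
    have split1 : (∑ s, ∑ t, c s t * kt (Z s ω) (Z t ω))
        = (∑ s, ∑ t, c s t * k (Z s ω) (Z t ω)) - (∑ s, ∑ t, c s t * kp (Z s ω))
          - (∑ s, ∑ t, c s t * kp (Z t ω)) + (∑ s, ∑ t, c s t * kpp) := by
      have h1 : (∑ s, ∑ t, c s t * kt (Z s ω) (Z t ω))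
          = ∑ s, ∑ t, (c s t * k (Z s ω) (Z t ω) - c s t * kp (Z s ω)
            - c s t * kp (Z t ω) + c s t * kpp) := by
        refine Finset.sum_congr rfl fun s _ => Finset.sum_congr rfl fun t _ => ?_
        rw [hkt' (Z s ω) (Z t ω)]
        ring
      rw [h1]
      simp only [Finset.sum_add_distrib, Finset.sum_sub_distrib]
    have z2 : (∑ s, ∑ t, c s t * kp (Z s ω)) = 0 := by
      refine Finset.sum_eq_zero fun s _ => ?_
      rw [← Finset.sum_mul, hrow s, zero_mul]
    have z3 : (∑ s, ∑ t, c s t * kp (Z t ω)) = 0 := by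
      rw [Finset.sum_comm]
      refine Finset.sum_eq_zero fun t _ => ?_
      rw [← Finset.sum_mul, hcol t, zero_mul]
    have z4 : (∑ s, ∑ t : Fin n₁ ⊕ Fin n₂, c s t * kpp) = 0 := by
      refine Finset.sum_eq_zero fun s _ => ?_
      rw [← Finset.sum_mul, hrow s, zero_mul]
    rw [split1, z2, z3, z4, hTn ω]
    have hsymmXY : (∑ j, ∑ i, k (Y j ω) (X i ω)) = ∑ i, ∑ j, k (X i ω) (Y j ω) := by
      rw [Finset.sum_comm]
      exact Finset.sum_congr rfl fun i _ => Finset.sum_congr rfl fun j _ => hk_symm _ _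
    have hinner1 : ∀ i : Fin n₁, (∑ t, c (Sum.inl i) t * k (Z (Sum.inl i) ω) (Z t ω))
        = a * (∑ i', k (X i ω) (X i' ω)) + m * (∑ j, k (X i ω) (Y j ω)) := by
      intro i
      rw [Fintype.sum_sum_type]
      simp only [hcdef, hZdef, Sum.elim_inl, Sum.elim_inr]
      rw [← Finset.mul_sum, ← Finset.mul_sum]
    have hinner2 : ∀ j : Fin n₂, (∑ t, c (Sum.inr j) t * k (Z (Sum.inr j) ω) (Z t ω))
        = m * (∑ i, k (Y j ω) (X i ω)) + b * (∑ j', k (Y j ω) (Y j' ω)) := by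
      intro j
      rw [Fintype.sum_sum_type]
      simp only [hcdef, hZdef, Sum.elim_inl, Sum.elim_inr]
      rw [← Finset.mul_sum, ← Finset.mul_sum]
    rw [Fintype.sum_sum_type, Finset.sum_congr rfl (fun i _ => hinner1 i),
      Finset.sum_congr rfl (fun j _ => hinner2 j), Finset.sum_add_distrib,
      Finset.sum_add_distrib, ← Finset.mul_sum, ← Finset.mul_sum, ← Finset.mul_sum,
      ← Finset.mul_sum, hsymmXY, hadef, hbdef, hmdef]
    field_simp
    ring
  -- apply the variance bound
  have hvb := var_core (μ := μ0) (P := P) (Z := Z) (g := kt) hZmeas hZlaw hindep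
    hkt_meas hkt_symm hkt_bdd hdeg c hcsymm
  have hfun : (fun ω => (n:ℝ) * Tn ω)
      = fun ω => ∑ s, ∑ t, c s t * kt (Z s ω) (Z t ω) := funext hpoint
  rw [← hfun, hmercer.1] at hvb
  -- numeric computations
  have hSd : (∑ s, (c s s) ^ 2) = (n₁:ℝ) * a ^ 2 + (n₂:ℝ) * b ^ 2 := by
    rw [Fintype.sum_sum_type]
    simp only [hcdef, Sum.elim_inl, Sum.elim_inr, Finset.sum_const, Finset.card_univ,
      Fintype.card_fin, nsmul_eq_mul]
  have hSo : (∑ s, ∑ t, if s = t then 0 else (c s t) ^ 2)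
      ≤ (n₁:ℝ)^2 * a^2 + (n₂:ℝ)^2 * b^2 + 2 * (n₁:ℝ) * (n₂:ℝ) * m^2 := by
    calc (∑ s, ∑ t, if s = t then 0 else (c s t) ^ 2) ≤ ∑ s, ∑ t, (c s t) ^ 2 := by
          refine Finset.sum_le_sum fun s _ => Finset.sum_le_sum fun t _ => ?_
          split
          · exact sq_nonneg _
          · exact le_refl _
      _ = (n₁:ℝ)^2 * a^2 + (n₂:ℝ)^2 * b^2 + 2 * (n₁:ℝ) * (n₂:ℝ) * m^2 := by
          rw [Fintype.sum_sum_type]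
          have e1 : ∀ i : Fin n₁, (∑ t, (c (Sum.inl i) t) ^ 2)
              = (n₁:ℝ) * a^2 + (n₂:ℝ) * m^2 := by
            intro i
            rw [Fintype.sum_sum_type]
            simp only [hcdef, Sum.elim_inl, Sum.elim_inr, Finset.sum_const, Finset.card_univ,
              Fintype.card_fin, nsmul_eq_mul]
          have e2 : ∀ j : Fin n₂, (∑ t, (c (Sum.inr j) t) ^ 2)
              = (n₁:ℝ) * m^2 + (n₂:ℝ) * b^2 := by
            intro j
            rw [Fintype.sum_sum_type]
            simp only [hcdef, Sum.elim_inl, Sum.elim_inr, Finset.sum_const, Finset.card_univ,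
              Fintype.card_fin, nsmul_eq_mul]
          rw [Finset.sum_congr rfl (fun i _ => e1 i), Finset.sum_congr rfl (fun j _ => e2 j)]
          simp only [Finset.sum_const, Finset.card_univ, Fintype.card_fin, nsmul_eq_mul]
          ring
  have hlamsq_nonneg : (0:ℝ) ≤ ∑' j, (lam j) ^ 2 := tsum_nonneg (fun j => sq_nonneg _)
  have hmain : variance (fun ω => (n:ℝ) * Tn ω) P
      ≤ (2 / (((n₁:ℝ) / (n:ℝ)) * ((n₂:ℝ) / (n:ℝ))) ^ 2) * (∑' j, lam j ^ 2)
        + (16 / (n:ℝ)) * ((((n₁:ℝ) / (n:ℝ))⁻¹) ^ 3 + (((n₂:ℝ) / (n:ℝ))⁻¹) ^ 3) := by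
    refine le_trans hvb ?_
    have hterm1 : 16 * (∑ s, (c s s) ^ 2)
        = (16 / (n:ℝ)) * ((((n₁:ℝ) / (n:ℝ))⁻¹) ^ 3 + (((n₂:ℝ) / (n:ℝ))⁻¹) ^ 3) := by
      rw [hSd, hadef, hbdef]
      field_simp
    have hterm2 : 2 * (∑' j, (lam j) ^ 2) * (∑ s, ∑ t, if s = t then 0 else (c s t) ^ 2)
        ≤ (2 / (((n₁:ℝ) / (n:ℝ)) * ((n₂:ℝ) / (n:ℝ))) ^ 2) * (∑' j, lam j ^ 2) := by
      calc 2 * (∑' j, (lam j) ^ 2) * (∑ s, ∑ t, if s = t then 0 else (c s t) ^ 2)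
          ≤ 2 * (∑' j, (lam j) ^ 2)
            * ((n₁:ℝ)^2 * a^2 + (n₂:ℝ)^2 * b^2 + 2 * (n₁:ℝ) * (n₂:ℝ) * m^2) := by
            refine mul_le_mul_of_nonneg_left hSo (by positivity)
        _ = (2 / (((n₁:ℝ) / (n:ℝ)) * ((n₂:ℝ) / (n:ℝ))) ^ 2) * (∑' j, lam j ^ 2) := by
            rw [hadef, hbdef, hmdef, hnR]
            field_simp
            ring
    linarith [hterm1, hterm2]
  refine ⟨hmain, fun hbig => ?_⟩
  refine le_trans hmain ?_
  have hρ1 : (0:ℝ) < (n₁:ℝ) / (n:ℝ) := by positivity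
  have hρ2 : (0:ℝ) < (n₂:ℝ) / (n:ℝ) := by positivity
  have h1 : (2 / (((n₁:ℝ) / (n:ℝ)) * ((n₂:ℝ) / (n:ℝ))) ^ 2) * (∑' j, lam j ^ 2)
      ≤ 32 / (((n₁:ℝ) / (n:ℝ)) * ((n₂:ℝ) / (n:ℝ))) ^ 2 := by
    calc (2 / (((n₁:ℝ) / (n:ℝ)) * ((n₂:ℝ) / (n:ℝ))) ^ 2) * (∑' j, lam j ^ 2)
        ≤ (2 / (((n₁:ℝ) / (n:ℝ)) * ((n₂:ℝ) / (n:ℝ))) ^ 2) * 16 :=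
          mul_le_mul_of_nonneg_left hmercer.2 (by positivity)
      _ = 32 / (((n₁:ℝ) / (n:ℝ)) * ((n₂:ℝ) / (n:ℝ))) ^ 2 := by ring
  have h2 : (16 / (n:ℝ)) * ((((n₁:ℝ) / (n:ℝ))⁻¹) ^ 3 + (((n₂:ℝ) / (n:ℝ))⁻¹) ^ 3) ≤ 0.1 := by
    have hx1 : (0:ℝ) ≤ (((n₁:ℝ) / (n:ℝ))⁻¹) ^ 3 := by positivity
    have hx2 : (0:ℝ) ≤ (((n₂:ℝ) / (n:ℝ))⁻¹) ^ 3 := by positivity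
    have hmono : (((n₁:ℝ) / (n:ℝ))⁻¹) ^ 3 + (((n₂:ℝ) / (n:ℝ))⁻¹) ^ 3
        ≤ (((n₁:ℝ) / (n:ℝ))⁻¹) ^ 3 + 4 * (((n₂:ℝ) / (n:ℝ))⁻¹) ^ 3 := by linarith
    have hB : 16 * ((((n₁:ℝ) / (n:ℝ))⁻¹) ^ 3 + 4 * (((n₂:ℝ) / (n:ℝ))⁻¹) ^ 3)
        < 0.1 * (n:ℝ) := by nlinarith [hbig]
    rw [div_mul_eq_mul_div, div_le_iff₀ hnpos]
    nlinarith [hmono, hB]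
  linarith [h1, h2]
end

section
/- Let k̃ be a bounded measurable symmetric kernel on Ω × Ω with |k̃(x,y)| ≤ 4 for all x, y and ∫ k̃(x,z)p(z)dz = 0 for every x. If x_1, …, x_m are i.i.d. samples from p, then E[ (m⁻¹ Σ_{i,i'=1}^m k̃(x_i, x_{i'}))² ] = m⁻¹·E_{x∼p}[k̃(x,x)²] + (1 − 1/m)·(E_{x∼p}[k̃(x,x)])² + 2(1 − 1/m)·E_{x,x'∼p}[k̃(x,x')²], and in particular this second moment is at most (E_{x∼p}[k̃(x,x)])² + 2·E_{x,x'∼p}[k̃(x,x')²] + m⁻¹·E_{x∼p}[k̃(x,x)²]. -/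
open MeasureTheory ProbabilityTheory Filter
open scoped BigOperators Topology NNReal ENNReal

private lemma integrable_of_bdd' {α : Type*} [MeasurableSpace α] {ν : Measure α}
    [IsFiniteMeasure ν] {f : α → ℝ} (hf : AEStronglyMeasurable f ν) {c : ℝ}
    (h : ∀ a, |f a| ≤ c) : Integrable f ν :=
  ⟨hf, HasFiniteIntegral.of_bounded (C := c) (ae_of_all _ (by simpa [Real.norm_eq_abs] using h))⟩


private lemma ite_pair_split {α : Type*} [DecidableEq α] {i i' : α} (h : i ≠ i') (C : ℝ)
    (j j' : α) :
    (if j = i ∧ j' = i' then C else if j = i' ∧ j' = i then C else 0)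
      = (if j' = i' then (if j = i then C else 0) else 0)
        + (if j' = i then (if j = i' then C else 0) else 0) := by
  by_cases a : j = i <;> by_cases b : j' = i' <;> by_cases c : j = i' <;> by_cases e : j' = i <;>
    simp_all

/-- Let `k̃` be a bounded measurable symmetric kernel with
`|k̃(x,y)| ≤ 4` and `∫ k̃(x,z) p(z) dz = 0` for all `x`. If `x₁, …, x_m` are i.i.d.
from `p`, then
`E[(m⁻¹ Σ_{i,i'} k̃(x_i,x_{i'}))²] = m⁻¹ E_p[k̃(x,x)²] + (1 − 1/m)(E_p[k̃(x,x)])²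
  + 2(1 − 1/m) E_{x,x'∼p}[k̃(x,x')²]`,
and in particular this second moment is at most
`(E_p[k̃(x,x)])² + 2 E_{x,x'∼p}[k̃(x,x')²] + m⁻¹ E_p[k̃(x,x)²]`. -/
theorem centered_vstat_second_moment
    {d : ℕ}
    (Ω : Set (EuclideanSpace ℝ (Fin d))) (hΩ : IsCompact Ω)
    (p : EuclideanSpace ℝ (Fin d) → ℝ)
    (hp_cont : Continuous p) (hp_nonneg : ∀ x, 0 ≤ p x)
    (hp_supp : ∀ x, x ∉ Ω → p x = 0) (hp_int : ∫ x, p x = 1)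
    (kt : EuclideanSpace ℝ (Fin d) → EuclideanSpace ℝ (Fin d) → ℝ)
    (hkt_meas : Measurable (Function.uncurry kt))
    (hkt_symm : ∀ x y, kt x y = kt y x)
    (hkt_bdd : ∀ x y, |kt x y| ≤ 4)
    (hkt_centered : ∀ x, (∫ z, kt x z * p z) = 0)
    (m : ℕ) (hm : 0 < m)
    {Ω' : Type*} [MeasurableSpace Ω'] (P : Measure Ω') [IsProbabilityMeasure P]
    (x : Fin m → Ω' → EuclideanSpace ℝ (Fin d))
    (hx_meas : ∀ i, Measurable (x i))
    (hx_law : ∀ i, Measure.map (x i) P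
      = volume.withDensity (fun z => ENNReal.ofReal (p z)))
    (hx_indep : iIndepFun x P) :
    (∫ ω, ((m : ℝ)⁻¹ * ∑ i, ∑ i', kt (x i ω) (x i' ω)) ^ 2 ∂P)
      = (m : ℝ)⁻¹ * (∫ z, (kt z z) ^ 2 * p z)
        + (1 - 1 / (m : ℝ)) * (∫ z, kt z z * p z) ^ 2
        + 2 * (1 - 1 / (m : ℝ)) * (∫ z, ∫ w, (kt z w) ^ 2 * p z * p w)
    ∧ (∫ ω, ((m : ℝ)⁻¹ * ∑ i, ∑ i', kt (x i ω) (x i' ω)) ^ 2 ∂P)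
      ≤ (∫ z, kt z z * p z) ^ 2
        + 2 * (∫ z, ∫ w, (kt z w) ^ 2 * p z * p w)
        + (m : ℝ)⁻¹ * (∫ z, (kt z z) ^ 2 * p z) := by
  classical
  set μ : Measure (EuclideanSpace ℝ (Fin d)) :=
    volume.withDensity (fun z => ENNReal.ofReal (p z)) with hμdef
  have hp_meas : Measurable p := hp_cont.measurable
  have hp_integrable : Integrable p :=
    hp_cont.integrable_of_hasCompactSupport (HasCompactSupport.intro hΩ hp_supp)
  haveI hμprob : IsProbabilityMeasure μ := by
    constructor
    rw [hμdef, withDensity_apply _ MeasurableSet.univ, Measure.restrict_univ,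
      ← ofReal_integral_eq_lintegral_ofReal hp_integrable (ae_of_all _ hp_nonneg), hp_int,
      ENNReal.ofReal_one]
  have hconv : ∀ f : EuclideanSpace ℝ (Fin d) → ℝ, Measurable f →
      ∫ z, f z ∂μ = ∫ z, f z * p z := by
    intro f hf
    rw [hμdef]
    rw [show (fun z => ENNReal.ofReal (p z)) = (fun z => ((Real.toNNReal (p z) : ℝ≥0) : ℝ≥0∞))
      from rfl]
    rw [integral_withDensity_eq_integral_smul (hp_meas.real_toNNReal)]
    refine integral_congr_ae (ae_of_all _ fun z => ?_)
    simp [NNReal.smul_def, Real.coe_toNNReal _ (hp_nonneg z), mul_comm]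

  -- measurability helpers
  have hk1 : ∀ z, Measurable (kt z) := fun z => hkt_meas.comp measurable_prodMk_left
  have hdiagm : Measurable fun z => kt z z :=
    hkt_meas.comp (measurable_id.prodMk measurable_id)
  have hkω : ∀ a b : Fin m, Measurable fun ω => kt (x a ω) (x b ω) :=
    fun a b => hkt_meas.comp ((hx_meas a).prodMk (hx_meas b))
  have hb16 : ∀ a b c e : EuclideanSpace ℝ (Fin d), |kt a b * kt c e| ≤ 16 := by
    intro a b c e
    rw [abs_mul]
    nlinarith [hkt_bdd a b, hkt_bdd c e, abs_nonneg (kt a b), abs_nonneg (kt c e)]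
  -- laws
  have hlaw1 : ∀ (i : Fin m) (f : EuclideanSpace ℝ (Fin d) → ℝ), Measurable f →
      ∫ ω, f (x i ω) ∂P = ∫ z, f z ∂μ := by
    intro i f hf
    rw [← hx_law i]
    exact (integral_map (hx_meas i).aemeasurable hf.aestronglyMeasurable).symm
  have hlaw2 : ∀ i j : Fin m, i ≠ j →
      Measure.map (fun ω => (x i ω, x j ω)) P = μ.prod μ := by
    intro i j hij
    have h := hx_indep.indepFun hij
    rw [indepFun_iff_map_prod_eq_prod_map_map (hx_meas i).aemeasurable
      (hx_meas j).aemeasurable] at h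
    rw [h, hx_law i, hx_law j]
  have hE2 : ∀ i j : Fin m, i ≠ j →
      ∀ g : EuclideanSpace ℝ (Fin d) × EuclideanSpace ℝ (Fin d) → ℝ, Measurable g →
      ∫ ω, g (x i ω, x j ω) ∂P = ∫ y, g y ∂(μ.prod μ) := by
    intro i j hij g hg
    rw [← hlaw2 i j hij]
    exact (integral_map ((hx_meas i).prodMk (hx_meas j)).aemeasurable
      hg.aestronglyMeasurable).symm
  have hlaw3 : ∀ a b c : Fin m, a ≠ b → a ≠ c → b ≠ c →
      Measure.map (fun ω => ((x a ω, x b ω), x c ω)) P = (μ.prod μ).prod μ := by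
    intro a b c hab hac hbc
    have h := hx_indep.indepFun_prodMk hx_meas a b c hac hbc
    rw [indepFun_iff_map_prod_eq_prod_map_map
      ((hx_meas a).prodMk (hx_meas b)).aemeasurable (hx_meas c).aemeasurable] at h
    rw [h, hlaw2 a b hab, hx_law c]
  have hE3 : ∀ a b c : Fin m, a ≠ b → a ≠ c → b ≠ c →
      ∀ g : (EuclideanSpace ℝ (Fin d) × EuclideanSpace ℝ (Fin d))
        × EuclideanSpace ℝ (Fin d) → ℝ, Measurable g →
      ∫ ω, g ((x a ω, x b ω), x c ω) ∂P = ∫ y, g y ∂((μ.prod μ).prod μ) := by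
    intro a b c hab hac hbc g hg
    rw [← hlaw3 a b c hab hac hbc]
    exact (integral_map (((hx_meas a).prodMk (hx_meas b)).prodMk
      (hx_meas c)).aemeasurable hg.aestronglyMeasurable).symm
  -- centering over μ
  have hcent : ∀ z, ∫ w, kt z w ∂μ = 0 := fun z => by
    rw [hconv _ (hk1 z)]; exact hkt_centered z
  have hmean0 : ∀ i j : Fin m, i ≠ j → ∫ ω, kt (x i ω) (x j ω) ∂P = 0 := by
    intro i j hij
    refine Eq.trans (hE2 i j hij (fun y => kt y.1 y.2) hkt_meas) ?_
    refine Eq.trans (integral_prod _ (integrable_of_bdd' hkt_meas.aestronglyMeasurable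
      (fun y => hkt_bdd y.1 y.2))) ?_
    simp [hcent]

  set A : ℝ := ∫ z, kt z z * p z with hA_def
  set B : ℝ := ∫ z, (kt z z) ^ 2 * p z with hB_def
  set C : ℝ := ∫ z, ∫ w, (kt z w) ^ 2 * p z * p w with hC_def
  have hAμ : ∫ z, kt z z ∂μ = A := hconv _ hdiagm
  have hBμ : ∫ z, (kt z z) ^ 2 ∂μ = B := hconv _ (hdiagm.pow_const 2)
  have hsqm : Measurable fun y : EuclideanSpace ℝ (Fin d) × EuclideanSpace ℝ (Fin d) =>
      (kt y.1 y.2) ^ 2 := hkt_meas.pow_const 2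
  have hsqbdd : ∀ y : EuclideanSpace ℝ (Fin d) × EuclideanSpace ℝ (Fin d),
      |(kt y.1 y.2) ^ 2| ≤ 16 := by
    intro y
    have h := hkt_bdd y.1 y.2
    rw [abs_pow]
    nlinarith [abs_nonneg (kt y.1 y.2)]
  have hinm : Measurable fun z => ∫ w, (kt z w) ^ 2 * p w := by
    apply StronglyMeasurable.measurable
    exact StronglyMeasurable.integral_prod_right'
      (f := fun q : EuclideanSpace ℝ (Fin d) × EuclideanSpace ℝ (Fin d) => (kt q.1 q.2) ^ 2 * p q.2)
      ((hsqm.mul (hp_meas.comp measurable_snd)).stronglyMeasurable)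
  have hCμ : ∫ y : EuclideanSpace ℝ (Fin d) × EuclideanSpace ℝ (Fin d),
      (kt y.1 y.2) ^ 2 ∂(μ.prod μ) = C := by
    refine Eq.trans (integral_prod _ (integrable_of_bdd' hsqm.aestronglyMeasurable hsqbdd)) ?_
    have hinner : ∀ z, ∫ w, (kt z w) ^ 2 ∂μ = ∫ w, (kt z w) ^ 2 * p w :=
      fun z => hconv _ ((hk1 z).pow_const 2)
    simp_rw [hinner]
    refine Eq.trans (hconv _ hinm) ?_
    rw [hC_def]
    refine integral_congr_ae (ae_of_all _ fun z => ?_)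
    beta_reduce
    rw [← integral_mul_const]
    refine integral_congr_ae (ae_of_all _ fun w => ?_)
    beta_reduce
    ring
  have hCnn : 0 ≤ C := by
    rw [hC_def]
    refine integral_nonneg fun z => integral_nonneg fun w => ?_
    exact mul_nonneg (mul_nonneg (sq_nonneg _) (hp_nonneg z)) (hp_nonneg w)
  -- single-index expectations
  have hdiagE : ∀ i : Fin m, ∫ ω, kt (x i ω) (x i ω) ∂P = A :=
    fun i => Eq.trans (hlaw1 i (fun z => kt z z) hdiagm) hAμ
  have hBcase : ∀ i : Fin m, ∫ ω, kt (x i ω) (x i ω) * kt (x i ω) (x i ω) ∂P = B := by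
    intro i
    refine Eq.trans (hlaw1 i (fun z => kt z z * kt z z) (hdiagm.mul hdiagm)) ?_
    refine Eq.trans ?_ hBμ
    refine integral_congr_ae (ae_of_all _ fun z => ?_)
    ring
  have hCcase : ∀ i j : Fin m, i ≠ j →
      ∫ ω, kt (x i ω) (x j ω) * kt (x i ω) (x j ω) ∂P = C := by
    intro i j hij
    refine Eq.trans (hE2 i j hij (fun y => kt y.1 y.2 * kt y.1 y.2) (hkt_meas.mul hkt_meas)) ?_
    refine Eq.trans ?_ hCμ
    refine integral_congr_ae (ae_of_all _ fun y => ?_)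
    ring
  have hCcase' : ∀ i j : Fin m, i ≠ j →
      ∫ ω, kt (x i ω) (x j ω) * kt (x j ω) (x i ω) ∂P = C := by
    intro i j hij
    refine Eq.trans ?_ (hCcase i j hij)
    refine integral_congr_ae (ae_of_all _ fun ω => ?_)
    beta_reduce
    rw [hkt_symm (x j ω) (x i ω)]

  -- zero lemmas
  have Z1 : ∀ a b : Fin m, a ≠ b →
      ∫ ω, kt (x a ω) (x a ω) * kt (x a ω) (x b ω) ∂P = 0 := by
    intro a b hab
    have hg : Measurable fun y : EuclideanSpace ℝ (Fin d) × EuclideanSpace ℝ (Fin d) =>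
        kt y.1 y.1 * kt y.1 y.2 :=
      (hkt_meas.comp (measurable_fst.prodMk measurable_fst)).mul hkt_meas
    refine Eq.trans (hE2 a b hab (fun y => kt y.1 y.1 * kt y.1 y.2) hg) ?_
    refine Eq.trans (integral_prod _ (integrable_of_bdd' hg.aestronglyMeasurable
      (fun y => hb16 _ _ _ _))) ?_
    have : ∀ z, ∫ w, kt z z * kt z w ∂μ = 0 := fun z => by
      rw [integral_const_mul, hcent z, mul_zero]
    simp_rw [this]
    exact integral_zero _ _
  have Z2 : ∀ a b c : Fin m, a ≠ b → a ≠ c → b ≠ c →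
      ∫ ω, kt (x a ω) (x b ω) * kt (x a ω) (x c ω) ∂P = 0 := by
    intro a b c hab hac hbc
    have hg : Measurable fun y : (EuclideanSpace ℝ (Fin d) × EuclideanSpace ℝ (Fin d))
        × EuclideanSpace ℝ (Fin d) => kt y.2 y.1.1 * kt y.2 y.1.2 :=
      ((hkt_meas.comp (measurable_snd.prodMk (measurable_fst.comp measurable_fst))).mul
        (hkt_meas.comp (measurable_snd.prodMk (measurable_snd.comp measurable_fst))))
    refine Eq.trans (hE3 b c a hbc hab.symm hac.symm
      (fun y => kt y.2 y.1.1 * kt y.2 y.1.2) hg) ?_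
    refine Eq.trans (integral_prod_symm _ (integrable_of_bdd' hg.aestronglyMeasurable
      (fun y => hb16 _ _ _ _))) ?_
    have : ∀ z : EuclideanSpace ℝ (Fin d),
        ∫ y : EuclideanSpace ℝ (Fin d) × EuclideanSpace ℝ (Fin d),
          kt z y.1 * kt z y.2 ∂(μ.prod μ) = 0 := fun z => by
      rw [integral_prod_mul (f := fun u => kt z u) (g := fun u => kt z u), hcent z, mul_zero]
    simp_rw [this]
    exact integral_zero _ _
  -- independence product
  have hdd : ∀ a b c e : Fin m, a ≠ c → a ≠ e → b ≠ c → b ≠ e →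
      ∫ ω, kt (x a ω) (x b ω) * kt (x c ω) (x e ω) ∂P
        = (∫ ω, kt (x a ω) (x b ω) ∂P) * (∫ ω, kt (x c ω) (x e ω) ∂P) := by
    intro a b c e hac hae hbc hbe
    have h := (hx_indep.indepFun_prodMk_prodMk hx_meas a b c e hac hae hbc hbe).comp
      hkt_meas hkt_meas
    exact IndepFun.integral_mul_eq_mul_integral h (hkω a b).aestronglyMeasurable (hkω c e).aestronglyMeasurable

  have hsymm_int : ∀ a b c e : Fin m,
      ∫ ω, kt (x a ω) (x b ω) * kt (x c ω) (x e ω) ∂P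
        = ∫ ω, kt (x b ω) (x a ω) * kt (x e ω) (x c ω) ∂P := by
    intro a b c e
    refine integral_congr_ae (ae_of_all _ fun ω => ?_)
    beta_reduce
    rw [hkt_symm (x a ω) (x b ω), hkt_symm (x c ω) (x e ω)]
  have hcomm_int : ∀ a b c e : Fin m,
      ∫ ω, kt (x a ω) (x b ω) * kt (x c ω) (x e ω) ∂P
        = ∫ ω, kt (x c ω) (x e ω) * kt (x a ω) (x b ω) ∂P := by
    intro a b c e
    refine integral_congr_ae (ae_of_all _ fun ω => ?_)
    beta_reduce
    ring
  -- classification of all terms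
  have hT : ∀ i i' j j' : Fin m,
      ∫ ω, kt (x i ω) (x i' ω) * kt (x j ω) (x j' ω) ∂P
        = if i = i' then (if j = j' then (if i = j then B else A * A) else 0)
          else (if j = i ∧ j' = i' then C else if j = i' ∧ j' = i then C else 0) := by
    intro i i' j j'
    by_cases hii : i = i'
    · subst hii
      rw [if_pos rfl]
      by_cases hjj : j = j'
      · subst hjj
        rw [if_pos rfl]
        by_cases hij : i = j
        · subst hij
          rw [if_pos rfl]
          exact hBcase i
        · rw [if_neg hij, hdd i i j j hij hij hij hij, hdiagE i, hdiagE j]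
      · rw [if_neg hjj]
        by_cases hij : i = j
        · subst hij
          exact Z1 i j' hjj
        · by_cases hij' : i = j'
          · subst hij'
            refine Eq.trans ?_ (Z1 i j hij)
            refine integral_congr_ae (ae_of_all _ fun ω => ?_)
            beta_reduce
            rw [hkt_symm (x j ω) (x i ω)]
          · rw [hdd i i j j' hij hij' hij hij', hmean0 j j' hjj, mul_zero]
    · rw [if_neg hii]
      by_cases h1 : j = i ∧ j' = i'
      · rw [if_pos h1, h1.1, h1.2]
        exact hCcase i i' hii
      · rw [if_neg h1]
        by_cases h2 : j = i' ∧ j' = i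
        · rw [if_pos h2, h2.1, h2.2]
          exact hCcase' i i' hii
        · rw [if_neg h2]
          by_cases hjj : j = j'
          · subst hjj
            rw [hcomm_int i i' j j]
            by_cases hji : j = i
            · subst hji
              exact Z1 j i' hii
            · by_cases hji' : j = i'
              · subst hji'
                refine Eq.trans ?_ (Z1 j i (Ne.symm hii))
                refine integral_congr_ae (ae_of_all _ fun ω => ?_)
                beta_reduce
                rw [hkt_symm (x i ω) (x j ω)]
              · rw [hdd j j i i' (fun h => hji h) (fun h => hji' h) (fun h => hji h)
                  (fun h => hji' h), hmean0 i i' hii, mul_zero]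
          · -- i ≠ i', j ≠ j', pairs not equal nor swapped
            by_cases hij : i = j
            · -- shared first coordinates
              rw [← hij]
              have hii'2 : i ≠ j' := fun h => hjj (hij.symm.trans h)
              have hi'j' : i' ≠ j' := fun h => h1 ⟨hij.symm, h.symm⟩
              exact Z2 i i' j' hii hii'2 hi'j'
            · by_cases hij' : i = j'
              · -- i = j', so j ≠ i' (else swapped)
                rw [← hij']
                have hi'j : i' ≠ j := fun h => h2 ⟨h.symm, hij'.symm⟩
                refine Eq.trans ?_ (Z2 i i' j hii hij hi'j)
                refine integral_congr_ae (ae_of_all _ fun ω => ?_)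
                beta_reduce
                rw [hkt_symm (x j ω) (x i ω)]
              · by_cases hi'j : i' = j
                · rw [← hi'j]
                  have hi'j'2 : i' ≠ j' := fun h => hjj (hi'j.symm.trans h)
                  refine Eq.trans ?_ (Z2 i' i j' (Ne.symm hii) hi'j'2 hij')
                  refine integral_congr_ae (ae_of_all _ fun ω => ?_)
                  beta_reduce
                  rw [hkt_symm (x i ω) (x i' ω)]
                · by_cases hi'j' : i' = j'
                  · rw [← hi'j']
                    refine Eq.trans ?_ (Z2 i' i j (Ne.symm hii) hi'j hij)
                    refine integral_congr_ae (ae_of_all _ fun ω => ?_)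
                    beta_reduce
                    rw [hkt_symm (x i ω) (x i' ω), hkt_symm (x j ω) (x i' ω)]
                  · rw [hdd i i' j j' hij hij' (fun h => hi'j h) (fun h => hi'j' h),
                      hmean0 i i' hii, hmean0 j j' hjj, mul_zero]

  -- integral/sum swap
  have hint4 : ∀ a b c e : Fin m,
      Integrable (fun ω => kt (x a ω) (x b ω) * kt (x c ω) (x e ω)) P :=
    fun a b c e => integrable_of_bdd' ((hkω a b).mul (hkω c e)).aestronglyMeasurable
      (fun ω => hb16 _ _ _ _)
  have swap : ∫ ω, ∑ i : Fin m, ∑ i' : Fin m, ∑ j : Fin m, ∑ j' : Fin m,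
        kt (x i ω) (x i' ω) * kt (x j ω) (x j' ω) ∂P
      = ∑ i : Fin m, ∑ i' : Fin m, ∑ j : Fin m, ∑ j' : Fin m,
        ∫ ω, kt (x i ω) (x i' ω) * kt (x j ω) (x j' ω) ∂P := by
    rw [integral_finset_sum _ fun i _ => integrable_finset_sum _ fun i' _ =>
      integrable_finset_sum _ fun j _ => integrable_finset_sum _ fun j' _ => hint4 i i' j j']
    refine Finset.sum_congr rfl fun i _ => ?_
    rw [integral_finset_sum _ fun i' _ => integrable_finset_sum _ fun j _ =>
      integrable_finset_sum _ fun j' _ => hint4 i i' j j']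
    refine Finset.sum_congr rfl fun i' _ => ?_
    rw [integral_finset_sum _ fun j _ => integrable_finset_sum _ fun j' _ => hint4 i i' j j']
    refine Finset.sum_congr rfl fun j _ => ?_
    exact integral_finset_sum _ fun j' _ => hint4 i i' j j'
  -- combinatorial sums
  have hF1 : ∀ i : Fin m, (∑ j : Fin m, ∑ j' : Fin m,
      if j = j' then (if i = j then B else A * A) else 0)
      = (m : ℝ) * (A * A) + (B - A * A) := by
    intro i
    have h1 : ∀ j : Fin m, (∑ j' : Fin m, if j = j' then (if i = j then B else A * A) else 0)
        = (if i = j then B else A * A) := by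
      intro j
      simp [Finset.sum_ite_eq]
    simp_rw [h1]
    have h2 : ∀ j : Fin m, (if i = j then B else A * A)
        = (A * A) + (if i = j then B - A * A else 0) := by
      intro j; split_ifs <;> ring
    simp_rw [h2]
    rw [Finset.sum_add_distrib, Finset.sum_const, Finset.sum_ite_eq]
    simp [Finset.card_univ, nsmul_eq_mul]
  have hF2 : ∀ i i' : Fin m, i ≠ i' → (∑ j : Fin m, ∑ j' : Fin m,
      if j = i ∧ j' = i' then C else if j = i' ∧ j' = i then C else 0) = C + C := by
    intro i i' h
    simp_rw [ite_pair_split h C, Finset.sum_add_distrib]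
    rw [Finset.sum_comm (f := fun j j' => if j' = i' then (if j = i then C else 0) else 0),
      Finset.sum_comm (f := fun j j' => if j' = i then (if j = i' then C else 0) else 0)]
    simp [Finset.sum_ite_eq']
  have hsum : (∑ i : Fin m, ∑ i' : Fin m, ∑ j : Fin m, ∑ j' : Fin m,
      (if i = i' then (if j = j' then (if i = j then B else A * A) else 0)
        else (if j = i ∧ j' = i' then C else if j = i' ∧ j' = i then C else 0)))
      = (m:ℝ) * ((m:ℝ) * (A * A) + (B - A * A)) + ((m:ℝ) * (m:ℝ) - (m:ℝ)) * (C + C) := by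
    have hrow : ∀ i i' : Fin m, (∑ j : Fin m, ∑ j' : Fin m,
        (if i = i' then (if j = j' then (if i = j then B else A * A) else 0)
          else (if j = i ∧ j' = i' then C else if j = i' ∧ j' = i then C else 0)))
        = if i = i' then ((m:ℝ) * (A * A) + (B - A * A)) else (C + C) := by
      intro i i'
      by_cases h : i = i'
      · simp only [if_pos h]
        exact hF1 i
      · simp only [if_neg h]
        exact hF2 i i' h
    simp_rw [hrow]
    have hpt : ∀ i i' : Fin m, (if i = i' then ((m:ℝ) * (A * A) + (B - A * A)) else (C + C))
        = (C + C) + (if i = i' then ((m:ℝ) * (A * A) + (B - A * A)) - (C + C) else 0) := by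
      intro i i'; split_ifs <;> ring
    simp_rw [hpt, Finset.sum_add_distrib, Finset.sum_const, Finset.sum_ite_eq,
      Finset.card_univ, Fintype.card_fin, Finset.mem_univ, if_true, nsmul_eq_mul]
    rw [Finset.sum_const, Finset.card_univ, Fintype.card_fin, nsmul_eq_mul]
    push_cast
    ring
  -- pointwise expansion of the square
  have hexp : ∀ ω : Ω', ((m : ℝ)⁻¹ * ∑ i, ∑ i', kt (x i ω) (x i' ω)) ^ 2
      = ((m:ℝ)⁻¹)^2 * ∑ i : Fin m, ∑ i' : Fin m, ∑ j : Fin m, ∑ j' : Fin m,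
          kt (x i ω) (x i' ω) * kt (x j ω) (x j' ω) := by
    intro ω
    rw [mul_pow]
    congr 1
    rw [pow_two]
    simp_rw [Finset.sum_mul, Finset.mul_sum]
  have hm' : (m:ℝ) ≠ 0 := Nat.cast_ne_zero.mpr hm.ne'
  have main : ∫ ω, ((m : ℝ)⁻¹ * ∑ i, ∑ i', kt (x i ω) (x i' ω)) ^ 2 ∂P
      = (m:ℝ)⁻¹ * B + (1 - 1/(m:ℝ)) * A ^ 2 + 2 * (1 - 1/(m:ℝ)) * C := by
    refine Eq.trans (integral_congr_ae (ae_of_all _ hexp)) ?_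
    refine Eq.trans (integral_const_mul _ _) ?_
    rw [swap]
    simp_rw [hT]
    rw [hsum]
    field_simp
    ring
  refine ⟨main, ?_⟩
  rw [main]
  have h1 : 0 ≤ 1/(m:ℝ) := by positivity
  have h2 : 1/(m:ℝ) ≤ 1 := by
    rw [div_le_one (by exact_mod_cast hm)]
    exact_mod_cast hm
  nlinarith [sq_nonneg A, hCnn, mul_nonneg h1 (sq_nonneg A), mul_nonneg h1 hCnn]
end
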